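/- arXiv:2108.03590 — 9 statements merged into one kernel-verified Lean document; each statement's English description precedes it below -/
import Mathlib

section
/- For any integers m ≥ 0 and n ≥ m+2, the generalized Narayana polynomial N_{n,m}(x) has exactly one positive zero; that is, there exists a unique real number r > 0 with N_{n,m}(r) = 0. -/
/-- The generalized Narayana polynomial `N_{n,m}(x)`, with the convention
`C(m, k-1) = 0` when `k = 0`. -/
noncomputable def genNarayana (n m : ℕ) (x : ℝ) : ℝ :=
  ∑ k ∈ Finset.range (n + 1),
    (((n.choose k : ℝ) * (m.choose k : ℝ)) -
      (if k = 0 then 0 else (n.choose (k + 1) : ℝ) * (m.choose (k - 1) : ℝ))) * x ^ k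

namespace GNaux

noncomputable def c (n m k : ℕ) : ℝ :=
  ((n.choose k : ℝ) * (m.choose k : ℝ)) -
    (if k = 0 then 0 else (n.choose (k + 1) : ℝ) * (m.choose (k - 1) : ℝ))

lemma c_zero (n m : ℕ) : c n m 0 = 1 := by simp [c]

lemma c_eq_zero (n m k : ℕ) (h : m + 2 ≤ k) : c n m k = 0 := by
  have h1 : m.choose k = 0 := Nat.choose_eq_zero_of_lt (by omega)
  have h2 : m.choose (k - 1) = 0 := Nat.choose_eq_zero_of_lt (by omega)
  have hk0 : k ≠ 0 := by omega
  simp [c, h1, h2, hk0]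

lemma key_le (n m k : ℕ) (hn : m + 2 ≤ n) (hk1 : 1 ≤ k) (hkm : k ≤ m)
    (h : k * (n - m) ≤ m + 1) :
    n.choose (k + 1) * m.choose (k - 1) ≤ n.choose k * m.choose k := by
  have h1 : n.choose (k + 1) * (k + 1) = n.choose k * (n - k) :=
    Nat.choose_succ_right_eq n k
  have h2 : m.choose k * k = m.choose (k - 1) * (m - (k - 1)) := by
    have h' := Nat.choose_succ_right_eq m (k - 1)
    rwa [Nat.sub_add_cancel hk1] at h'
  have hpos : 0 < (k + 1) * (m - (k - 1)) := by
    have h3 : 0 < m - (k - 1) := by omega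
    positivity
  apply Nat.le_of_mul_le_mul_right _ hpos
  have expand : n.choose (k + 1) * m.choose (k - 1) * ((k + 1) * (m - (k - 1)))
      = (n.choose (k + 1) * (k + 1)) * (m.choose (k - 1) * (m - (k - 1))) := by ring
  rw [expand, h1, ← h2]
  have hineq : (n - k) * k ≤ (k + 1) * (m - (k - 1)) := by
    have e1 : n - k = (m - k) + (n - m) := by omega
    have e2 : m - (k - 1) = (m - k) + 1 := by omega
    have e3 : m + 1 = (m - k) + k + 1 := by omega
    rw [e1, e2]
    rw [e3] at h
    nlinarith [h]
  calc n.choose k * (n - k) * (m.choose k * k)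
      = (n.choose k * m.choose k) * ((n - k) * k) := by ring
    _ ≤ (n.choose k * m.choose k) * ((k + 1) * (m - (k - 1))) :=
        Nat.mul_le_mul_left _ hineq

lemma key_ge (n m k : ℕ) (hn : m + 2 ≤ n) (hk1 : 1 ≤ k) (hkm : k ≤ m)
    (h : m + 2 ≤ k * (n - m)) :
    n.choose k * m.choose k ≤ n.choose (k + 1) * m.choose (k - 1) := by
  have h1 : n.choose (k + 1) * (k + 1) = n.choose k * (n - k) :=
    Nat.choose_succ_right_eq n k
  have h2 : m.choose k * k = m.choose (k - 1) * (m - (k - 1)) := by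
    have h' := Nat.choose_succ_right_eq m (k - 1)
    rwa [Nat.sub_add_cancel hk1] at h'
  have hpos : 0 < (k + 1) * (m - (k - 1)) := by
    have h3 : 0 < m - (k - 1) := by omega
    positivity
  apply Nat.le_of_mul_le_mul_right _ hpos
  have expand : n.choose (k + 1) * m.choose (k - 1) * ((k + 1) * (m - (k - 1)))
      = (n.choose (k + 1) * (k + 1)) * (m.choose (k - 1) * (m - (k - 1))) := by ring
  rw [expand, h1, ← h2]
  have hineq : (k + 1) * (m - (k - 1)) ≤ (n - k) * k := by
    have e1 : n - k = (m - k) + (n - m) := by omega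
    have e2 : m - (k - 1) = (m - k) + 1 := by omega
    have e3 : m + 2 = (m - k) + k + 2 := by omega
    rw [e1, e2]
    rw [e3] at h
    nlinarith [h]
  calc n.choose k * m.choose k * ((k + 1) * (m - (k - 1)))
      = (n.choose k * m.choose k) * ((k + 1) * (m - (k - 1))) := by ring
    _ ≤ (n.choose k * m.choose k) * ((n - k) * k) := Nat.mul_le_mul_left _ hineq
    _ = n.choose k * (n - k) * (m.choose k * k) := by ring

lemma c_nonneg (n m k : ℕ) (hn : m + 2 ≤ n) (hk : k ≤ (m + 1) / (n - m)) :
    0 ≤ c n m k := by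
  rcases Nat.eq_zero_or_pos k with rfl | hk1
  · rw [c_zero]; norm_num
  have hd : 0 < n - m := by omega
  have hmul : k * (n - m) ≤ m + 1 := (Nat.le_div_iff_mul_le hd).mp hk
  have h2k : k * 2 ≤ k * (n - m) := Nat.mul_le_mul_left k (by omega)
  have hkm : k ≤ m := by omega
  have hkey := key_le n m k hn hk1 hkm hmul
  have hcast : ((n.choose (k + 1) * m.choose (k - 1) : ℕ) : ℝ)
      ≤ ((n.choose k * m.choose k : ℕ) : ℝ) := Nat.cast_le.mpr hkey
  push_cast at hcast
  have hk0 : k ≠ 0 := by omega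
  simp only [c, if_neg hk0]
  linarith

lemma c_nonpos (n m k : ℕ) (hn : m + 2 ≤ n) (hk : (m + 1) / (n - m) < k) :
    c n m k ≤ 0 := by
  have hd : 0 < n - m := by omega
  rcases le_or_gt (m + 2) k with hbig | hsmall
  · rw [c_eq_zero n m k hbig]
  by_cases hk2 : k = m + 1
  · subst hk2
    have h1 : m.choose (m + 1) = 0 := Nat.choose_eq_zero_of_lt (by omega)
    have hk0 : m + 1 ≠ 0 := by omega
    simp only [c, h1, if_neg hk0, Nat.cast_zero, mul_zero, zero_sub,
      Nat.add_sub_cancel, neg_nonpos]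
    positivity
  · have hkm : k ≤ m := by omega
    have hk1 : 1 ≤ k := Nat.lt_of_le_of_lt (Nat.zero_le _) hk
    have hmul : m + 1 < k * (n - m) := (Nat.div_lt_iff_lt_mul hd).mp hk
    have hkey := key_ge n m k hn hk1 hkm (by omega)
    have hcast : ((n.choose k * m.choose k : ℕ) : ℝ)
        ≤ ((n.choose (k + 1) * m.choose (k - 1) : ℕ) : ℝ) := Nat.cast_le.mpr hkey
    push_cast at hcast
    have hk0 : k ≠ 0 := by omega
    simp only [c, if_neg hk0]
    linarith

lemma c_top (n m : ℕ) (hn : m + 2 ≤ n) : c n m (m + 1) ≤ -1 := by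
  have h1 : m.choose (m + 1) = 0 := Nat.choose_eq_zero_of_lt (by omega)
  have hk0 : m + 1 ≠ 0 := by omega
  have h2 : (1 : ℝ) ≤ (n.choose (m + 2) : ℝ) := by
    exact_mod_cast Nat.one_le_iff_ne_zero.mpr (Nat.choose_pos (by omega : m + 2 ≤ n)).ne'
  simp only [c, h1, if_neg hk0, Nat.cast_zero, mul_zero, zero_sub, Nat.add_sub_cancel,
    Nat.choose_self, Nat.cast_one, mul_one]
  linarith

/-- K, the sign-change index. -/
def K (n m : ℕ) : ℕ := (m + 1) / (n - m)

noncomputable def pP (n m : ℕ) (x : ℝ) : ℝ :=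
  ∑ k ∈ Finset.range (K n m + 1), c n m k * x ^ k

noncomputable def qQ (n m : ℕ) (x : ℝ) : ℝ :=
  ∑ k ∈ Finset.Icc (K n m + 1) (m + 1), (-(c n m k)) * x ^ k

lemma K_le (n m : ℕ) (hn : m + 2 ≤ n) : K n m + 1 ≤ m + 1 := by
  have hd : 2 ≤ n - m := by omega
  have h1 : (m + 1) / (n - m) ≤ (m + 1) / 2 := Nat.div_le_div_left hd (by norm_num)
  have : K n m ≤ (m + 1) / 2 := h1
  omega

lemma f_eq (n m : ℕ) (hn : m + 2 ≤ n) (x : ℝ) :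
    genNarayana n m x = pP n m x - qQ n m x := by
  have h1 : genNarayana n m x = ∑ k ∈ Finset.range (n + 1), c n m k * x ^ k := rfl
  have h2 : ∑ k ∈ Finset.range (n + 1), c n m k * x ^ k
      = ∑ k ∈ Finset.range (m + 2), c n m k * x ^ k := by
    symm
    apply Finset.sum_subset (Finset.range_subset_range.mpr (by omega))
    intro k _ hk2
    simp only [Finset.mem_range, not_lt] at hk2
    rw [c_eq_zero n m k (by omega)]
    ring
  have h3 : ∑ k ∈ Finset.range (m + 2), c n m k * x ^ k
      = (∑ k ∈ Finset.range (K n m + 1), c n m k * x ^ k)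
        + ∑ k ∈ Finset.Icc (K n m + 1) (m + 1), c n m k * x ^ k := by
    rw [Finset.range_eq_Ico, Finset.range_eq_Ico, ← Finset.Ico_add_one_right_eq_Icc]
    exact (Finset.sum_Ico_consecutive (fun k => c n m k * x ^ k) (m := 0) (n := K n m + 1) (k := m + 2) (by omega) (by have := K_le n m hn; omega)).symm
  rw [h1, h2, h3, pP, qQ]
  rw [show ∑ k ∈ Finset.Icc (K n m + 1) (m + 1), (-(c n m k)) * x ^ k
      = -∑ k ∈ Finset.Icc (K n m + 1) (m + 1), c n m k * x ^ k by
    rw [← Finset.sum_neg_distrib]; apply Finset.sum_congr rfl; intros; ring]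
  ring

lemma pP_ge_one (n m : ℕ) (hn : m + 2 ≤ n) {x : ℝ} (hx : 0 < x) : 1 ≤ pP n m x := by
  have h0 : c n m 0 * x ^ 0 = 1 := by rw [c_zero]; simp
  calc (1 : ℝ) = c n m 0 * x ^ 0 := h0.symm
    _ ≤ pP n m x := by
        apply Finset.single_le_sum (f := fun k => c n m k * x ^ k)
        · intro k hk
          have hk' : k ≤ K n m := Nat.lt_succ_iff.mp (Finset.mem_range.mp hk)
          exact mul_nonneg (c_nonneg n m k hn hk') (le_of_lt (pow_pos hx k))
        · exact Finset.mem_range.mpr (Nat.succ_pos _)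

lemma pP_pos (n m : ℕ) (hn : m + 2 ≤ n) {x : ℝ} (hx : 0 < x) : 0 < pP n m x :=
  lt_of_lt_of_le one_pos (pP_ge_one n m hn hx)

lemma pow_cross {x y : ℝ} (hx : 0 < x) (hxy : x ≤ y) (a t : ℕ) :
    x ^ (a + t) * y ^ a ≤ y ^ (a + t) * x ^ a := by
  have hy : 0 < y := lt_of_lt_of_le hx hxy
  rw [pow_add, pow_add]
  have ht : x ^ t ≤ y ^ t := pow_le_pow_left₀ hx.le hxy t
  calc x ^ a * x ^ t * y ^ a = (x ^ a * y ^ a) * x ^ t := by ring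
    _ ≤ (x ^ a * y ^ a) * y ^ t := mul_le_mul_of_nonneg_left ht (by positivity)
    _ = y ^ a * y ^ t * x ^ a := by ring

lemma qQ_ge (n m : ℕ) (hn : m + 2 ≤ n) {x : ℝ} (hx : 0 < x) :
    x ^ (m + 1) ≤ qQ n m x := by
  have hmem : m + 1 ∈ Finset.Icc (K n m + 1) (m + 1) :=
    Finset.mem_Icc.mpr ⟨K_le n m hn, le_refl _⟩
  have hterm : x ^ (m + 1) ≤ (-(c n m (m + 1))) * x ^ (m + 1) := by
    have h1 := c_top n m hn
    nlinarith [pow_pos hx (m + 1)]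
  calc x ^ (m + 1) ≤ (-(c n m (m + 1))) * x ^ (m + 1) := hterm
    _ ≤ qQ n m x := by
        apply Finset.single_le_sum (f := fun k => (-(c n m k)) * x ^ k)
        · intro k hk
          have hk' : K n m < k := by
            have := (Finset.mem_Icc.mp hk).1; omega
          exact mul_nonneg (neg_nonneg.mpr (c_nonpos n m k hn hk'))
            (le_of_lt (pow_pos hx k))
        · exact hmem

lemma q_mono (n m : ℕ) (hn : m + 2 ≤ n) {x y : ℝ} (hx : 0 < x) (hxy : x ≤ y) :
    qQ n m x * y ^ (K n m + 1) ≤ qQ n m y * x ^ (K n m + 1) := by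
  have hy : 0 < y := lt_of_lt_of_le hx hxy
  rw [qQ, qQ, Finset.sum_mul, Finset.sum_mul]
  apply Finset.sum_le_sum
  intro j hj
  obtain ⟨hj1, hj2⟩ := Finset.mem_Icc.mp hj
  obtain ⟨t, rfl⟩ := Nat.exists_eq_add_of_le hj1
  have hcn : 0 ≤ -(c n m (K n m + 1 + t)) :=
    neg_nonneg.mpr (c_nonpos n m _ hn (by show K n m < K n m + 1 + t; omega))
  have hkey : x ^ (K n m + 1 + t) * y ^ (K n m + 1)
      ≤ y ^ (K n m + 1 + t) * x ^ (K n m + 1) := pow_cross hx hxy (K n m + 1) t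
  calc (-(c n m (K n m + 1 + t))) * x ^ (K n m + 1 + t) * y ^ (K n m + 1)
      = (-(c n m (K n m + 1 + t))) * (x ^ (K n m + 1 + t) * y ^ (K n m + 1)) := by ring
    _ ≤ (-(c n m (K n m + 1 + t))) * (y ^ (K n m + 1 + t) * x ^ (K n m + 1)) :=
        mul_le_mul_of_nonneg_left hkey hcn
    _ = (-(c n m (K n m + 1 + t))) * y ^ (K n m + 1 + t) * x ^ (K n m + 1) := by ring

lemma p_mono (n m : ℕ) (hn : m + 2 ≤ n) {x y : ℝ} (hx : 0 < x) (hxy : x ≤ y) :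
    pP n m y * x ^ (K n m) ≤ pP n m x * y ^ (K n m) := by
  have hy : 0 < y := lt_of_lt_of_le hx hxy
  rw [pP, pP, Finset.sum_mul, Finset.sum_mul]
  apply Finset.sum_le_sum
  intro k hk
  have hk' : k ≤ K n m := Nat.lt_succ_iff.mp (Finset.mem_range.mp hk)
  obtain ⟨t, ht⟩ := Nat.exists_eq_add_of_le hk'
  have hc : 0 ≤ c n m k := c_nonneg n m k hn hk'
  have hkey : y ^ k * x ^ (K n m) ≤ x ^ k * y ^ (K n m) := by
    rw [ht]
    have := pow_cross hx hxy k t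
    linarith
  calc c n m k * y ^ k * x ^ (K n m) = c n m k * (y ^ k * x ^ (K n m)) := by ring
    _ ≤ c n m k * (x ^ k * y ^ (K n m)) := mul_le_mul_of_nonneg_left hkey hc
    _ = c n m k * x ^ k * y ^ (K n m) := by ring

lemma pP_le (n m : ℕ) (hn : m + 2 ≤ n) {t : ℝ} (ht : 1 ≤ t) :
    pP n m t ≤ (∑ k ∈ Finset.range (K n m + 1), c n m k) * t ^ K n m := by
  rw [pP, Finset.sum_mul]
  apply Finset.sum_le_sum
  intro k hk
  have hk' : k ≤ K n m := Nat.lt_succ_iff.mp (Finset.mem_range.mp hk)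
  have hc := c_nonneg n m k hn hk'
  have hpow : t ^ k ≤ t ^ K n m := pow_le_pow_right₀ ht hk'
  exact mul_le_mul_of_nonneg_left hpow hc

lemma S_ge_one (n m : ℕ) (hn : m + 2 ≤ n) :
    1 ≤ ∑ k ∈ Finset.range (K n m + 1), c n m k := by
  calc (1 : ℝ) = c n m 0 := (c_zero n m).symm
    _ ≤ _ := Finset.single_le_sum
        (fun k hk => c_nonneg n m k hn (Nat.lt_succ_iff.mp (Finset.mem_range.mp hk)))
        (Finset.mem_range.mpr (Nat.succ_pos _))

lemma exists_neg (n m : ℕ) (hn : m + 2 ≤ n) :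
    ∃ t : ℝ, 1 ≤ t ∧ genNarayana n m t < 0 := by
  set S := ∑ k ∈ Finset.range (K n m + 1), c n m k with hS
  have hS1 : 1 ≤ S := S_ge_one n m hn
  refine ⟨S + 1, by linarith, ?_⟩
  have ht1 : (1 : ℝ) ≤ S + 1 := by linarith
  have ht0 : (0 : ℝ) < S + 1 := by linarith
  have h1 : pP n m (S + 1) ≤ S * (S + 1) ^ K n m := pP_le n m hn ht1
  have h2 : (S + 1) ^ (m + 1) ≤ qQ n m (S + 1) := qQ_ge n m hn ht0
  have h3 : (S + 1) ^ (K n m + 1) ≤ (S + 1) ^ (m + 1) :=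
    pow_le_pow_right₀ ht1 (K_le n m hn)
  rw [f_eq n m hn]
  have h4 : (S + 1) ^ (K n m + 1) = (S + 1) ^ K n m * (S + 1) := pow_succ _ _
  have h5 : 0 < (S + 1) ^ K n m := pow_pos ht0 _
  nlinarith

lemma f_zero (n m : ℕ) : genNarayana n m 0 = 1 := by
  rw [show genNarayana n m 0 = ∑ k ∈ Finset.range (n + 1), c n m k * 0 ^ k from rfl]
  rw [Finset.sum_eq_single 0]
  · rw [c_zero]; norm_num
  · intro k _ hk; rw [zero_pow hk]; ring
  · intro hmem; exact absurd (Finset.mem_range.mpr (Nat.succ_pos _)) hmem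

lemma f_cont (n m : ℕ) : Continuous (genNarayana n m) := by
  unfold genNarayana
  exact continuous_finset_sum _ fun k _ => continuous_const.mul (continuous_pow k)

lemma uniq_aux (n m : ℕ) (hn : m + 2 ≤ n) {x y : ℝ} (hx : 0 < x) (hxy : x < y)
    (hfx : genNarayana n m x = 0) (hfy : genNarayana n m y = 0) : False := by
  have hy : 0 < y := lt_trans hx hxy
  have hpx : pP n m x = qQ n m x := by
    have h1 : pP n m x - qQ n m x = 0 := by rw [← f_eq n m hn x]; exact hfx
    linarith
  have hpy : pP n m y = qQ n m y := by
    have h1 : pP n m y - qQ n m y = 0 := by rw [← f_eq n m hn y]; exact hfy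
    linarith
  have hq1 := q_mono n m hn hx hxy.le
  have hp1 := p_mono n m hn hx hxy.le
  rw [← hpx, ← hpy] at hq1
  have hA : 0 < pP n m x := pP_pos n m hn hx
  have hB : 0 < pP n m y := pP_pos n m hn hy
  have hmul : (pP n m x * y ^ (K n m + 1)) * (pP n m y * x ^ K n m)
      ≤ (pP n m y * x ^ (K n m + 1)) * (pP n m x * y ^ K n m) :=
    mul_le_mul hq1 hp1 (by positivity) (by positivity)
  rw [pow_succ, pow_succ] at hmul
  have hpos : 0 < pP n m x * pP n m y * x ^ K n m * y ^ K n m := by positivity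
  nlinarith [mul_pos hpos (sub_pos.mpr hxy)]

end GNaux

theorem genNarayana_unique_positive_zero (m n : ℕ) (h : m + 2 ≤ n) :
    ∃! r : ℝ, 0 < r ∧ genNarayana n m r = 0 := by
  obtain ⟨t, ht1, htneg⟩ := GNaux.exists_neg n m h
  have ht0 : (0 : ℝ) < t := by linarith
  have hcont := GNaux.f_cont n m
  have h0 : genNarayana n m 0 = 1 := GNaux.f_zero n m
  have hsub := intermediate_value_Ioo' (le_of_lt ht0) hcont.continuousOn
  have hmem : (0 : ℝ) ∈ Set.Ioo (genNarayana n m t) (genNarayana n m 0) := by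
    refine ⟨htneg, ?_⟩
    rw [h0]; norm_num
  obtain ⟨r, hr_mem, hfr⟩ := hsub hmem
  refine ⟨r, ⟨hr_mem.1, hfr⟩, ?_⟩
  rintro s ⟨hs, hfs⟩
  rcases lt_trichotomy s r with hlt | heq | hgt
  · exact (GNaux.uniq_aux n m h hs hlt hfs hfr).elim
  · exact heq
  · exact (GNaux.uniq_aux n m h hr_mem.1 hgt hfr hfs).elim
end

section
/- Fix integers m ≥ 0 and n ≥ m+4. Then for every real x > 0 one has N_{n-1,m}(x) > N_{n,m}(x). -/
lemma key_ratio (p m j : ℕ) (hm : m ≤ p) :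
    p.choose j * m.choose (j + 1) ≤ p.choose (j + 1) * m.choose j := by
  apply Nat.le_of_mul_le_mul_right _ (Nat.succ_pos j)
  calc p.choose j * m.choose (j + 1) * (j + 1)
      = p.choose j * (m.choose (j + 1) * (j + 1)) := by ring
    _ = p.choose j * (m.choose j * (m - j)) := by rw [Nat.choose_succ_right_eq]
    _ ≤ p.choose j * (m.choose j * (p - j)) := by
        exact Nat.mul_le_mul_left _ (Nat.mul_le_mul_left _ (Nat.sub_le_sub_right hm j))
    _ = p.choose (j + 1) * (j + 1) * m.choose j := by
        rw [Nat.choose_succ_right_eq]; ring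
    _ = p.choose (j + 1) * m.choose j * (j + 1) := by ring

lemma key_coeff (p m j : ℕ) (hm : m ≤ p) :
    (p + 1).choose (j + 1) * m.choose (j + 1) + p.choose (j + 2) * m.choose j ≤
      p.choose (j + 1) * m.choose (j + 1) + (p + 1).choose (j + 2) * m.choose j := by
  have h1 : (p + 1).choose (j + 1) = p.choose j + p.choose (j + 1) := Nat.choose_succ_succ _ _
  have h2 : (p + 1).choose (j + 2) = p.choose (j + 1) + p.choose (j + 2) := Nat.choose_succ_succ _ _
  rw [h1, h2]
  have := key_ratio p m j hm
  nlinarith [this]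

lemma key_strict (p m : ℕ) (hm : m + 3 ≤ p) :
    (p + 1).choose 1 * m.choose 1 + p.choose 2 * m.choose 0 <
      p.choose 1 * m.choose 1 + (p + 1).choose 2 * m.choose 0 := by
  have h2 : (p + 1).choose 2 = p.choose 1 + p.choose 2 := Nat.choose_succ_succ _ _
  simp only [Nat.choose_one_right, Nat.choose_zero_right, h2, mul_one]
  nlinarith

theorem genNarayana_strict_anti_in_n (m n : ℕ) (h : m + 4 ≤ n) (x : ℝ) (hx : 0 < x) :
    genNarayana n m x < genNarayana (n - 1) m x := by
  obtain ⟨p, rfl⟩ : ∃ p, n = p + 1 := ⟨n - 1, by omega⟩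
  have hm : m + 3 ≤ p := by omega
  simp only [genNarayana, Nat.add_sub_cancel]
  rw [Finset.sum_range_succ (n := p + 1)]
  have hz : ((((p+1).choose (p+1) : ℝ) * (m.choose (p+1) : ℝ)) -
      (if p + 1 = 0 then 0 else ((p+1).choose (p+1+1) : ℝ) * (m.choose (p+1-1) : ℝ))) * x ^ (p+1) = 0 := by
    have h1 : m.choose (p+1) = 0 := Nat.choose_eq_zero_of_lt (by omega)
    have h2 : (p+1).choose (p+1+1) = 0 := Nat.choose_eq_zero_of_lt (by omega)
    simp [h1, h2]
  rw [hz, add_zero]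
  apply Finset.sum_lt_sum
  · intro k hk
    apply mul_le_mul_of_nonneg_right _ (le_of_lt (pow_pos hx k))
    cases k with
    | zero => simp
    | succ j =>
      simp only [Nat.succ_ne_zero, if_false, Nat.add_sub_cancel]
      rw [sub_le_sub_iff]
      exact_mod_cast key_coeff p m j (by omega)
  · refine ⟨1, Finset.mem_range.mpr (by omega), ?_⟩
    apply mul_lt_mul_of_pos_right _ (pow_pos hx 1)
    simp only [one_ne_zero, if_false]
    rw [sub_lt_sub_iff]
    exact_mod_cast key_strict p m hm
end

section
/- Let m ≥ 0 and n ≥ m+3 be integers, and let r_{n,m}^+ > 0 be the unique positive zero of N_{n,m}(x). Then 0 < r_{n,m}^+ ≤ 1/3. -/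
open Finset Polynomial

private lemma chooseProd_step (m p q : ℕ) (h : p + q + 2 ≤ m) :
    m.choose p * m.choose q ≤ m.choose (p + 1) * m.choose (q + 1) := by
  have h1 : m.choose (p + 1) * (p + 1) = m.choose p * (m - p) :=
    Nat.choose_succ_right_eq m p
  have h2 : m.choose (q + 1) * (q + 1) = m.choose q * (m - q) :=
    Nat.choose_succ_right_eq m q
  have key : m.choose p * m.choose q * ((p + 1) * (q + 1)) ≤
      m.choose (p + 1) * m.choose (q + 1) * ((p + 1) * (q + 1)) := by
    have : m.choose (p + 1) * m.choose (q + 1) * ((p + 1) * (q + 1)) =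
        (m.choose p * (m - p)) * (m.choose q * (m - q)) := by
      rw [← h1, ← h2]; ring
    rw [this]
    have hp : q + 1 ≤ m - p := by omega
    have hq : p + 1 ≤ m - q := by omega
    calc m.choose p * m.choose q * ((p + 1) * (q + 1))
        ≤ m.choose p * m.choose q * ((m - q) * (m - p)) := by
          exact Nat.mul_le_mul_left _ (Nat.mul_le_mul hq hp)
      _ = (m.choose p * (m - p)) * (m.choose q * (m - q)) := by ring
  exact Nat.le_of_mul_le_mul_right key (by positivity)

/-- coefficients of `((X+3)(X+1))^m`. -/
private def rr (m i : ℕ) : ℕ :=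
  ∑ pq ∈ Finset.HasAntidiagonal.antidiagonal i, 3 ^ (m - pq.1) * m.choose pq.1 * m.choose pq.2

private lemma coeff_B (m i : ℕ) :
    (((X + C 3) ^ m * (X + 1) ^ m : Polynomial ℕ)).coeff i = rr m i := by
  rw [Polynomial.coeff_mul, rr]
  refine Finset.sum_congr rfl fun pq _ => ?_
  rw [Polynomial.coeff_X_add_C_pow, Polynomial.coeff_X_add_one_pow]
  simp [Nat.cast_id]

/-- palindromy: `rr m (m+j) * 3^j = rr m (m-j)` for `j ≤ m`. -/
private lemma rr_palindrome (m j : ℕ) (hj : j ≤ m) :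
    rr m (m + j) * 3 ^ j = rr m (m - j) := by
  rw [rr, rr, Finset.sum_mul]
  have h1 : ∀ pq ∈ Finset.HasAntidiagonal.antidiagonal (m + j),
      3 ^ (m - pq.1) * m.choose pq.1 * m.choose pq.2 * 3 ^ j ≠ 0 →
      pq.1 ≤ m ∧ pq.2 ≤ m := by
    intro pq _ hval
    by_contra hnot
    apply hval
    rcases (not_and_or.mp hnot) with h' | h'
    · rw [Nat.choose_eq_zero_of_lt (by omega)]; ring
    · rw [Nat.choose_eq_zero_of_lt (show m < pq.2 by omega)]; ring
  have h2 : ∀ pq ∈ Finset.HasAntidiagonal.antidiagonal (m - j),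
      3 ^ (m - pq.1) * m.choose pq.1 * m.choose pq.2 ≠ 0 →
      pq.1 ≤ m ∧ pq.2 ≤ m := by
    intro pq _ hval
    by_contra hnot
    apply hval
    rcases (not_and_or.mp hnot) with h' | h'
    · rw [Nat.choose_eq_zero_of_lt (by omega)]; ring
    · rw [Nat.choose_eq_zero_of_lt (show m < pq.2 by omega)]; ring
  rw [← Finset.sum_filter_of_ne h1, ← Finset.sum_filter_of_ne h2]
  refine Finset.sum_nbij' (fun pq => (m - pq.2, m - pq.1)) (fun pq => (m - pq.2, m - pq.1)) ?_ ?_ ?_ ?_ ?_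
  · intro pq hpq
    simp only [Finset.mem_filter, Finset.HasAntidiagonal.mem_antidiagonal] at hpq ⊢
    omega
  · intro pq hpq
    simp only [Finset.mem_filter, Finset.HasAntidiagonal.mem_antidiagonal] at hpq ⊢
    omega
  · intro pq hpq
    simp only [Finset.mem_filter, Finset.HasAntidiagonal.mem_antidiagonal] at hpq
    ext <;> simp <;> omega
  · intro pq hpq
    simp only [Finset.mem_filter, Finset.HasAntidiagonal.mem_antidiagonal] at hpq
    ext <;> simp <;> omega
  · intro pq hpq
    simp only [Finset.mem_filter, Finset.HasAntidiagonal.mem_antidiagonal] at hpq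
    obtain ⟨hsum, hp, hq⟩ := hpq
    have e1 : m.choose (m - pq.2) = m.choose pq.2 := Nat.choose_symm hq
    have e2 : m.choose (m - pq.1) = m.choose pq.1 := Nat.choose_symm hp
    have e3 : m - (m - pq.2) = pq.2 := by omega
    rw [e1, e3]
    have e4 : m - pq.1 + j = pq.2 := by omega
    rw [← e4, pow_add, e2]
    ring

/-- two-step monotonicity: `rr m i ≤ 3 * rr m (i+2)` for `i+2 ≤ m`. -/
private lemma rr_step (m i : ℕ) (h : i + 2 ≤ m) : rr m i ≤ 3 * rr m (i + 2) := by
  rw [rr, rr, Finset.mul_sum]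
  have key : ∀ pq ∈ Finset.HasAntidiagonal.antidiagonal i,
      3 ^ (m - pq.1) * m.choose pq.1 * m.choose pq.2 ≤
      3 * (3 ^ (m - (pq.1 + 1)) * m.choose (pq.1 + 1) * m.choose (pq.2 + 1)) := by
    intro pq hpq
    have hs := Finset.HasAntidiagonal.mem_antidiagonal.mp hpq
    have h3 : 3 * 3 ^ (m - (pq.1 + 1)) = 3 ^ (m - pq.1) := by
      have : m - pq.1 = (m - (pq.1 + 1)) + 1 := by omega
      rw [this, pow_succ]; ring
    calc 3 ^ (m - pq.1) * m.choose pq.1 * m.choose pq.2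
        ≤ 3 ^ (m - pq.1) * (m.choose (pq.1 + 1) * m.choose (pq.2 + 1)) := by
          rw [mul_assoc]
          exact Nat.mul_le_mul_left _ (chooseProd_step m pq.1 pq.2 (by omega))
      _ = 3 * (3 ^ (m - (pq.1 + 1)) * m.choose (pq.1 + 1) * m.choose (pq.2 + 1)) := by
          rw [← h3]; ring
  calc ∑ pq ∈ Finset.HasAntidiagonal.antidiagonal i, 3 ^ (m - pq.1) * m.choose pq.1 * m.choose pq.2
      ≤ ∑ pq ∈ Finset.HasAntidiagonal.antidiagonal i,
          3 * (3 ^ (m - (pq.1 + 1)) * m.choose (pq.1 + 1) * m.choose (pq.2 + 1)) :=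
        Finset.sum_le_sum key
    _ = ∑ pq ∈ (Finset.HasAntidiagonal.antidiagonal i).map
          ⟨fun pq => (pq.1 + 1, pq.2 + 1), @id (Function.Injective fun pq : ℕ × ℕ => (pq.1 + 1, pq.2 + 1)) (by intro a b hab; simpa [Prod.ext_iff] using hab)⟩,
          3 * (3 ^ (m - pq.1) * m.choose pq.1 * m.choose pq.2) := by
        rw [Finset.sum_map]; simp only [Function.Embedding.coeFn_mk]
    _ ≤ ∑ pq ∈ Finset.HasAntidiagonal.antidiagonal (i + 2),
          3 * (3 ^ (m - pq.1) * m.choose pq.1 * m.choose pq.2) := by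
        apply Finset.sum_le_sum_of_subset
        intro pq hpq
        simp only [Finset.mem_map, Finset.HasAntidiagonal.mem_antidiagonal, Function.Embedding.coeFn_mk] at hpq ⊢
        obtain ⟨ab, hab, rfl⟩ := hpq
        omega

private lemma rr_vals : rr 0 0 = 1 ∧ rr 0 1 = 0 ∧ rr 0 2 = 0 ∧
    rr 1 0 = 3 ∧ rr 1 1 = 4 ∧ rr 1 2 = 1 ∧ rr 1 3 = 0 := by
  refine ⟨?_, ?_, ?_, ?_, ?_, ?_, ?_⟩ <;> rfl

private lemma key_ineq (d m : ℕ) (hd : 3 ≤ d) :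
    ∑ k ∈ Finset.range (m + 1), 3 ^ (d - k) * d.choose k * rr m (m - k) ≤
    3 * ∑ k ∈ Finset.range (m + 3), 3 ^ (d - k) * d.choose k * rr m (m + 2 - k) := by
  have hc2 : 3 ≤ d.choose 2 := by
    calc 3 = Nat.choose 3 2 := by decide
    _ ≤ d.choose 2 := Nat.choose_le_choose 2 hd
  rw [Finset.mul_sum]
  set G : ℕ → ℕ := fun k => if k ≤ m then 3 ^ (d - k) * d.choose k * rr m (m - k) else 0 with hG
  set H : ℕ → ℕ := fun k => 3 * (3 ^ (d - k) * d.choose k * rr m (m + 2 - k)) with hH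
  have hL : ∑ k ∈ Finset.range (m + 1), 3 ^ (d - k) * d.choose k * rr m (m - k) =
      ∑ k ∈ Finset.range (m + 3), G k := by
    rw [← Finset.sum_subset (Finset.range_subset_range.mpr (by omega : m + 1 ≤ m + 3))
      (fun x hx hnx => by
        simp only [Finset.mem_range] at hx hnx
        exact if_neg (by omega))]
    exact Finset.sum_congr rfl fun k hk =>
      (if_pos (by simp only [Finset.mem_range] at hk; omega)).symm
  rw [hL]
  rw [← Finset.sum_range_add_sum_Ico G (by omega : 3 ≤ m + 3),
      ← Finset.sum_range_add_sum_Ico H (by omega : 3 ≤ m + 3)]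
  have htail : ∑ k ∈ Finset.Ico 3 (m + 3), G k ≤ ∑ k ∈ Finset.Ico 3 (m + 3), H k := by
    apply Finset.sum_le_sum
    intro k hk
    simp only [Finset.mem_Ico] at hk
    by_cases hkm : k ≤ m
    · have e1 : m + 2 - k = (m - k) + 2 := by omega
      have hstep := rr_step m (m - k) (by omega)
      simp only [hG, hH, if_pos hkm, e1]
      calc 3 ^ (d - k) * d.choose k * rr m (m - k)
          ≤ 3 ^ (d - k) * d.choose k * (3 * rr m (m - k + 2)) :=
            Nat.mul_le_mul_left _ hstep
        _ = 3 * (3 ^ (d - k) * d.choose k * rr m (m - k + 2)) := by ring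
    · simp only [hG, hH, if_neg hkm]
      exact Nat.zero_le _
  have hhead : ∑ k ∈ Finset.range 3, G k ≤ ∑ k ∈ Finset.range 3, H k := by
    rw [Finset.sum_range_succ, Finset.sum_range_succ, Finset.sum_range_one,
        Finset.sum_range_succ, Finset.sum_range_succ, Finset.sum_range_one]
    obtain ⟨v1, v2, v3, v4, v5, v6, v7⟩ := rr_vals
    have hp1 : d - 1 = (d - 2) + 1 := by omega
    have hp0 : d - 0 = (d - 2) + 2 := by omega
    set p := 3 ^ (d - 2) with hp
    have e0 : (3:ℕ) ^ (d - 0) = 9 * p := by rw [hp0, pow_add, hp]; ring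
    have e1 : (3:ℕ) ^ (d - 1) = 3 * p := by rw [hp1, pow_add, hp]; ring
    match m with
    | 0 =>
      simp only [hG, hH]
      norm_num [v1, v2, v3]
      have e0' : (3:ℕ) ^ d = 9 * p := by
        rw [show d = (d - 2) + 2 by omega, pow_add, hp]; ring
      rw [e0', ← hp]
      nlinarith [Nat.mul_le_mul_left p hc2]
    | 1 =>
      simp only [hG, hH]
      norm_num [v4, v5, v6, v7]
      have e0' : (3:ℕ) ^ d = 9 * p := by
        rw [show d = (d - 2) + 2 by omega, pow_add, hp]; ring
      rw [e0', e1, ← hp]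
      nlinarith [Nat.mul_le_mul_left p hc2]
    | (m' + 2) =>
      have hm : 2 ≤ m' + 2 := by omega
      simp only [hG, hH, if_pos (by omega : 0 ≤ m' + 2), if_pos (by omega : 1 ≤ m' + 2),
        if_pos (le_refl 2), if_pos hm]
      norm_num
      have hpal1 := rr_palindrome (m' + 2) 1 (by omega)
      have hpal2 := rr_palindrome (m' + 2) 2 (by omega)
      have hstep := rr_step (m' + 2) m' (by omega)
      norm_num [show m' + 2 + 1 = m' + 3 from rfl, show m' + 2 + 2 = m' + 4 from rfl,
        show m' + 2 - 1 = m' + 1 by omega, show m' + 2 - 2 = m' by omega] at hpal1 hpal2 ⊢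
      have eg1 : rr (m' + 2) (m' + 1) = 3 * rr (m' + 2) (m' + 3) := by omega
      have eg2 : rr (m' + 2) m' = 9 * rr (m' + 2) (m' + 4) := by omega
      have h5 : 3 * rr (m' + 2) (m' + 4) ≤ rr (m' + 2) (m' + 2) := by omega
      rw [eg1, eg2, e1]
      have e0' : (3:ℕ) ^ d = 9 * p := by
        rw [show d = (d - 2) + 2 by omega, pow_add, hp]; ring
      rw [e0', ← hp]
      set X := rr (m' + 2) (m' + 2) with hX
      set Y := rr (m' + 2) (m' + 3) with hY
      set Z := rr (m' + 2) (m' + 4) with hZ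
      obtain ⟨e, he⟩ := Nat.exists_eq_add_of_le hc2
      obtain ⟨f, hf⟩ := Nat.exists_eq_add_of_le h5
      clear hL htail hG hH v1 v2 v3 v4 v5 v6 v7 hpal1 hpal2 hstep eg1 eg2 e0 e1 e0' hp0 hp1
      rw [he, hf]
      have expand : 3 * (9 * p * Z) + 3 * (3 * p * d * Y) + 3 * (p * (3 + e) * (3 * Z + f)) =
          (9 * p * (3 * Z + f) + 3 * p * d * (3 * Y) + p * (3 + e) * (9 * Z)) + 3 * (p * (e * f)) := by
        ring
      rw [expand]
      exact Nat.le_add_right _ _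
  exact Nat.add_le_add hhead htail

private lemma coeff_A (n m j : ℕ) :
    (((X + C 3) ^ n * (X + 1) ^ m : Polynomial ℕ)).coeff j =
    ∑ pq ∈ Finset.HasAntidiagonal.antidiagonal j, 3 ^ (n - pq.1) * n.choose pq.1 * m.choose pq.2 := by
  rw [Polynomial.coeff_mul]
  refine Finset.sum_congr rfl fun pq _ => ?_
  rw [Polynomial.coeff_X_add_C_pow, Polynomial.coeff_X_add_one_pow]
  simp [Nat.cast_id]

private lemma star (n m : ℕ) (h : m + 3 ≤ n) :
    ∑ k ∈ Finset.range (n + 1), n.choose k * m.choose k * 3 ^ (n - k) ≤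
    ∑ k ∈ Finset.range (n + 1),
      (if k = 0 then 0 else n.choose (k + 1) * m.choose (k - 1) * 3 ^ (n - k)) := by
  set A : Polynomial ℕ := (X + C 3) ^ n * (X + 1) ^ m with hA
  -- step 1 : LHS = A.coeff m
  have eq1 : ∑ k ∈ Finset.range (n + 1), n.choose k * m.choose k * 3 ^ (n - k) = A.coeff m := by
    rw [coeff_A, Finset.Nat.sum_antidiagonal_eq_sum_range_succ_mk]
    rw [← Finset.sum_subset (Finset.range_subset_range.mpr (by omega : m + 1 ≤ n + 1))
      (fun x hx hnx => by
        simp only [Finset.mem_range] at hx hnx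
        rw [Nat.choose_eq_zero_of_lt (show m < x by omega)]
        ring)]
    refine Finset.sum_congr rfl fun k hk => ?_
    simp only [Finset.mem_range] at hk
    rw [Nat.choose_symm (show k ≤ m by omega)]
    ring
  -- step 2 : RHS = 3 * A.coeff (m+2)
  have eq2 : ∑ k ∈ Finset.range (n + 1),
      (if k = 0 then 0 else n.choose (k + 1) * m.choose (k - 1) * 3 ^ (n - k)) =
      3 * A.coeff (m + 2) := by
    have hAc : A.coeff (m + 2) =
        ∑ k ∈ Finset.range (m + 3), 3 ^ (n - k) * n.choose k * m.choose (m + 2 - k) := by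
      rw [coeff_A, Finset.Nat.sum_antidiagonal_eq_sum_range_succ_mk]
    have hsucc : ∑ k ∈ Finset.range (m + 3), 3 ^ (n - k) * n.choose k * m.choose (m + 2 - k)
        = ∑ k ∈ Finset.range (m + 2),
            3 ^ (n - (k + 1)) * n.choose (k + 1) * m.choose (m + 2 - (k + 1)) := by
      rw [Finset.sum_range_succ' (fun k => 3 ^ (n - k) * n.choose k * m.choose (m + 2 - k)) (m + 2)]
      rw [Nat.choose_eq_zero_of_lt (show m < m + 2 - 0 by omega)]
      simp
    rw [hAc, hsucc, Finset.mul_sum]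
    rw [← Finset.sum_subset (Finset.range_subset_range.mpr (by omega : m + 2 ≤ n + 1))
      (fun x hx hnx => by
        simp only [Finset.mem_range] at hx hnx
        rw [if_neg (by omega), Nat.choose_eq_zero_of_lt (show m < x - 1 by omega)]
        ring)]
    refine Finset.sum_congr rfl fun k hk => ?_
    simp only [Finset.mem_range] at hk
    match k with
    | 0 =>
      simp [Nat.choose_eq_zero_of_lt (show m < m + 2 - (0 + 1) by omega)]
    | (k' + 1) =>
      rw [if_neg (by omega)]
      have e1 : m + 2 - (k' + 1 + 1) = m - k' := by omega
      have e2 : m.choose (m - k') = m.choose k' := Nat.choose_symm (by omega)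
      have e3 : k' + 1 - 1 = k' := by omega
      have e4 : (3:ℕ) ^ (n - (k' + 1)) = 3 * 3 ^ (n - (k' + 1 + 1)) := by
        rw [show n - (k' + 1) = (n - (k' + 1 + 1)) + 1 by omega, pow_succ]
        ring
      rw [e1, e2, e3, e4]
      ring
  rw [eq1, eq2]
  -- step 3 : A.coeff m ≤ 3 * A.coeff (m + 2) via the factorization through rr
  set d := n - m with hd
  have hd3 : 3 ≤ d := by omega
  have hfac : A = (X + C 3) ^ d * ((X + C 3) ^ m * (X + 1) ^ m) := by
    rw [hA, ← mul_assoc, ← pow_add, show d + m = n by omega]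
  have hcoef : ∀ j, A.coeff j =
      ∑ k ∈ Finset.range (j + 1), 3 ^ (d - k) * d.choose k * rr m (j - k) := by
    intro j
    rw [hfac, Polynomial.coeff_mul, Finset.Nat.sum_antidiagonal_eq_sum_range_succ_mk]
    dsimp only
    refine Finset.sum_congr rfl fun k _ => ?_
    rw [Polynomial.coeff_X_add_C_pow, coeff_B]
    simp [Nat.cast_id]
  rw [hcoef m, hcoef (m + 2), show m + 2 + 1 = m + 3 from rfl]
  exact key_ineq d m hd3

private lemma c_nonneg (n m k : ℕ) (h : m + 3 ≤ n) (hk1 : 1 ≤ k)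
    (hk : k * (n - m) ≤ m + 1) :
    n.choose (k + 1) * m.choose (k - 1) ≤ n.choose k * m.choose k := by
  have h3k : k * 3 ≤ k * (n - m) := Nat.mul_le_mul_left k (by omega)
  have hkm : k ≤ m := by omega
  obtain ⟨j, rfl⟩ : ∃ j, k = j + 1 := ⟨k - 1, by omega⟩
  simp only [Nat.add_sub_cancel]
  have idn : n.choose (j + 2) * (j + 2) = n.choose (j + 1) * (n - (j + 1)) :=
    Nat.choose_succ_right_eq n (j + 1)
  have idm : m.choose (j + 1) * (j + 1) = m.choose j * (m - j) :=
    Nat.choose_succ_right_eq m j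
  have hscal : (n - (j + 1)) * (j + 1) ≤ (j + 2) * (m - j) := by
    zify [show m ≤ n by omega, show j + 1 ≤ n by omega, show j ≤ m by omega] at hk ⊢
    nlinarith [hk]
  have main : n.choose (j + 2) * m.choose j * ((j + 2) * (j + 1)) ≤
      n.choose (j + 1) * m.choose (j + 1) * ((j + 2) * (j + 1)) := by
    calc n.choose (j + 2) * m.choose j * ((j + 2) * (j + 1))
        = (n.choose (j + 2) * (j + 2)) * (m.choose j * (j + 1)) := by ring
      _ = n.choose (j + 1) * m.choose j * ((n - (j + 1)) * (j + 1)) := by rw [idn]; ring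
      _ ≤ n.choose (j + 1) * m.choose j * ((j + 2) * (m - j)) :=
          Nat.mul_le_mul_left _ hscal
      _ = (n.choose (j + 1) * (j + 2)) * (m.choose j * (m - j)) := by ring
      _ = (n.choose (j + 1) * (j + 2)) * (m.choose (j + 1) * (j + 1)) := by rw [idm]
      _ = n.choose (j + 1) * m.choose (j + 1) * ((j + 2) * (j + 1)) := by ring
  exact Nat.le_of_mul_le_mul_right main (by positivity)

private lemma c_nonpos (n m k : ℕ) (h : m + 3 ≤ n) (hk1 : 1 ≤ k)
    (hk : m + 1 < k * (n - m)) :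
    n.choose k * m.choose k ≤ n.choose (k + 1) * m.choose (k - 1) := by
  by_cases hkm : m < k
  · rw [Nat.choose_eq_zero_of_lt hkm, Nat.mul_zero]
    exact Nat.zero_le _
  push_neg at hkm
  obtain ⟨j, rfl⟩ : ∃ j, k = j + 1 := ⟨k - 1, by omega⟩
  simp only [Nat.add_sub_cancel]
  have idn : n.choose (j + 2) * (j + 2) = n.choose (j + 1) * (n - (j + 1)) :=
    Nat.choose_succ_right_eq n (j + 1)
  have idm : m.choose (j + 1) * (j + 1) = m.choose j * (m - j) :=
    Nat.choose_succ_right_eq m j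
  have hscal : (j + 2) * (m - j) ≤ (n - (j + 1)) * (j + 1) := by
    zify [show m ≤ n by omega, show j + 1 ≤ n by omega, show j ≤ m by omega] at hk ⊢
    nlinarith [hk]
  have main : n.choose (j + 1) * m.choose (j + 1) * ((j + 2) * (j + 1)) ≤
      n.choose (j + 2) * m.choose j * ((j + 2) * (j + 1)) := by
    calc n.choose (j + 1) * m.choose (j + 1) * ((j + 2) * (j + 1))
        = (n.choose (j + 1) * (j + 2)) * (m.choose (j + 1) * (j + 1)) := by ring
      _ = (n.choose (j + 1) * (j + 2)) * (m.choose j * (m - j)) := by rw [idm]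
      _ = n.choose (j + 1) * m.choose j * ((j + 2) * (m - j)) := by ring
      _ ≤ n.choose (j + 1) * m.choose j * ((n - (j + 1)) * (j + 1)) :=
          Nat.mul_le_mul_left _ hscal
      _ = (n.choose (j + 1) * (n - (j + 1))) * (m.choose j * (j + 1)) := by ring
      _ = (n.choose (j + 2) * (j + 2)) * (m.choose j * (j + 1)) := by rw [idn]
      _ = n.choose (j + 2) * m.choose j * ((j + 2) * (j + 1)) := by ring
  exact Nat.le_of_mul_le_mul_right main (by positivity)

private lemma genNarayana_third_nonpos (n m : ℕ) (h : m + 3 ≤ n) :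
    genNarayana n m (1 / 3) ≤ 0 := by
  have h3 : (0:ℝ) < 3 ^ n := by positivity
  have key : genNarayana n m (1 / 3) * 3 ^ n =
      ((∑ k ∈ Finset.range (n + 1), n.choose k * m.choose k * 3 ^ (n - k) : ℕ) : ℝ) -
      ((∑ k ∈ Finset.range (n + 1),
        (if k = 0 then 0 else n.choose (k + 1) * m.choose (k - 1) * 3 ^ (n - k)) : ℕ) : ℝ) := by
    rw [genNarayana, Finset.sum_mul, Nat.cast_sum, Nat.cast_sum, ← Finset.sum_sub_distrib]
    refine Finset.sum_congr rfl fun k hk => ?_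
    simp only [Finset.mem_range] at hk
    have hpow : ((1:ℝ) / 3) ^ k * 3 ^ n = 3 ^ (n - k) := by
      rw [div_pow, one_pow, show (3:ℝ) ^ n = 3 ^ (n - k) * 3 ^ k by
        rw [← pow_add]; congr 1; omega]
      field_simp
    rw [mul_assoc, hpow, sub_mul]
    congr 1
    · push_cast; ring
    · split_ifs with hk0
      · simp
      · push_cast; ring
  have : genNarayana n m (1 / 3) * 3 ^ n ≤ 0 := by
    rw [key, sub_nonpos]
    exact_mod_cast star n m h
  nlinarith [this, h3]

theorem genNarayana_positive_zero_le_third (m n : ℕ) (h : m + 3 ≤ n) (r : ℝ)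
    (hr : 0 < r) (hroot : genNarayana n m r = 0) :
    0 < r ∧ r ≤ 1 / 3 := by
  refine ⟨hr, ?_⟩
  by_contra hgt
  push_neg at hgt
  have ht : (0:ℝ) < 1 / 3 := by norm_num
  obtain ⟨K, hK⟩ : ∃ K, K = (m + 1) / (n - m) := ⟨_, rfl⟩
  have hdpos : 0 < n - m := by omega
  have hKm : K < m + 1 := hK ▸ Nat.div_lt_self (by omega) (by omega)
  have hcomp : genNarayana n m r * (1/3 : ℝ) ^ K < genNarayana n m (1/3) * r ^ K := by
    rw [genNarayana, genNarayana, Finset.sum_mul, Finset.sum_mul]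
    apply Finset.sum_lt_sum
    · intro k hk
      set c : ℝ := ((n.choose k : ℝ) * (m.choose k : ℝ)) -
        (if k = 0 then 0 else (n.choose (k + 1) : ℝ) * (m.choose (k - 1) : ℝ)) with hc
      by_cases hkK : k ≤ K
      · have hcnn : 0 ≤ c := by
          rcases Nat.eq_zero_or_pos k with rfl | hk1
          · simp [hc]
          · rw [hc, sub_nonneg, if_neg (by omega)]
            have := c_nonneg n m k h hk1 ((Nat.le_div_iff_mul_le hdpos).mp (hK ▸ hkK))
            exact_mod_cast this
        obtain ⟨e, rfl⟩ : ∃ e, K = k + e := ⟨K - k, by omega⟩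
        have hm1 : r ^ k * (1/3 : ℝ) ^ (k + e) ≤ (1/3 : ℝ) ^ k * r ^ (k + e) := by
          rw [pow_add, pow_add]
          calc r ^ k * ((1/3 : ℝ) ^ k * (1/3 : ℝ) ^ e)
              = (r ^ k * (1/3 : ℝ) ^ k) * (1/3 : ℝ) ^ e := by ring
            _ ≤ (r ^ k * (1/3 : ℝ) ^ k) * r ^ e := by
                apply mul_le_mul_of_nonneg_left (pow_le_pow_left₀ ht.le hgt.le e)
                positivity
            _ = (1/3 : ℝ) ^ k * (r ^ k * r ^ e) := by ring
        calc c * r ^ k * (1/3 : ℝ) ^ (k + e) = c * (r ^ k * (1/3 : ℝ) ^ (k + e)) := by ring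
          _ ≤ c * ((1/3 : ℝ) ^ k * r ^ (k + e)) := mul_le_mul_of_nonneg_left hm1 hcnn
          _ = c * (1/3 : ℝ) ^ k * r ^ (k + e) := by ring
      · push_neg at hkK
        have hk1 : 1 ≤ k := by omega
        have hcnp : c ≤ 0 := by
          rw [hc, sub_nonpos, if_neg (by omega)]
          have := c_nonpos n m k h hk1 ((Nat.div_lt_iff_lt_mul hdpos).mp (hK ▸ hkK))
          exact_mod_cast this
        obtain ⟨e, rfl⟩ : ∃ e, k = K + e := ⟨k - K, by omega⟩
        have hm1 : (1/3 : ℝ) ^ (K + e) * r ^ K ≤ r ^ (K + e) * (1/3 : ℝ) ^ K := by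
          rw [pow_add, pow_add]
          calc (1/3 : ℝ) ^ K * (1/3 : ℝ) ^ e * r ^ K
              = ((1/3 : ℝ) ^ K * r ^ K) * (1/3 : ℝ) ^ e := by ring
            _ ≤ ((1/3 : ℝ) ^ K * r ^ K) * r ^ e := by
                apply mul_le_mul_of_nonneg_left (pow_le_pow_left₀ ht.le hgt.le e)
                positivity
            _ = r ^ K * r ^ e * (1/3 : ℝ) ^ K := by ring
        calc c * r ^ (K + e) * (1/3 : ℝ) ^ K = c * (r ^ (K + e) * (1/3 : ℝ) ^ K) := by ring
          _ ≤ c * ((1/3 : ℝ) ^ (K + e) * r ^ K) := mul_le_mul_of_nonpos_left hm1 hcnp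
          _ = c * (1/3 : ℝ) ^ (K + e) * r ^ K := by ring
    · refine ⟨m + 1, by simp only [Finset.mem_range]; omega, ?_⟩
      have hc0 : ((n.choose (m+1) : ℝ) * (m.choose (m+1) : ℝ)) -
          (if m + 1 = 0 then 0 else (n.choose (m + 2) : ℝ) * (m.choose m : ℝ)) < 0 := by
        rw [if_neg (by omega), Nat.choose_eq_zero_of_lt (by omega : m < m + 1)]
        have hpos : 0 < (n.choose (m + 2) : ℝ) :=
          by exact_mod_cast Nat.choose_pos (by omega : m + 2 ≤ n)
        simp only [Nat.cast_zero, mul_zero, zero_mul, Nat.choose_self, Nat.cast_one, mul_one,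
          zero_sub, neg_neg, Nat.cast_ofNat]
        linarith [hpos]
      set c : ℝ := ((n.choose (m+1) : ℝ) * (m.choose (m+1) : ℝ)) -
        (if m + 1 = 0 then 0 else (n.choose (m + 2) : ℝ) * (m.choose m : ℝ)) with hc
      obtain ⟨e, he⟩ : ∃ e, m + 1 = K + (e + 1) := ⟨m - K, by omega⟩
      have hm1 : (1/3 : ℝ) ^ (m + 1) * r ^ K < r ^ (m + 1) * (1/3 : ℝ) ^ K := by
        rw [he, pow_add ((1:ℝ)/3) K (e + 1), pow_add r K (e + 1)]
        have hstrict : (1/3 : ℝ) ^ (e + 1) < r ^ (e + 1) :=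
          pow_lt_pow_left₀ hgt ht.le (by omega)
        calc (1/3 : ℝ) ^ K * (1/3 : ℝ) ^ (e + 1) * r ^ K
            = ((1/3 : ℝ) ^ K * r ^ K) * (1/3 : ℝ) ^ (e + 1) := by ring
          _ < ((1/3 : ℝ) ^ K * r ^ K) * r ^ (e + 1) := by
              apply mul_lt_mul_of_pos_left hstrict
              positivity
          _ = r ^ K * r ^ (e + 1) * (1/3 : ℝ) ^ K := by ring
      calc c * r ^ (m + 1) * (1/3 : ℝ) ^ K = c * (r ^ (m + 1) * (1/3 : ℝ) ^ K) := by ring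
        _ < c * ((1/3 : ℝ) ^ (m + 1) * r ^ K) := mul_lt_mul_of_neg_left hm1 hc0
        _ = c * (1/3 : ℝ) ^ (m + 1) * r ^ K := by ring
  rw [hroot, zero_mul] at hcomp
  have hnp := genNarayana_third_nonpos n m h
  nlinarith [pow_pos hr K]
end

section
/- Fix an integer m ≥ 0, and for each integer n ≥ m+3 let r_{n,m}^+ > 0 be the unique positive zero of N_{n,m}(x). Then the sequence (r_{n,m}^+) tends to 0 as n → ∞. -/
private lemma genNarayana_neg_of_big (m n : ℕ) (ε x : ℝ) (hε : 0 < ε) (hx : ε ≤ x)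
    (hmn : m + 2 ≤ n)
    (hbig : (∑ k ∈ Finset.range (m + 1), (m.choose k : ℝ) / ε ^ (m + 1 - k)) * (n : ℝ) ^ m
      < (n.choose (m + 2) : ℝ)) :
    genNarayana n m x < 0 := by
  have hx0 : 0 < x := hε.trans_le hx
  set K : ℝ := ∑ k ∈ Finset.range (m + 1), (m.choose k : ℝ) / ε ^ (m + 1 - k) with hKdef
  have hsplit : genNarayana n m x =
      (∑ k ∈ Finset.range (n + 1), (n.choose k : ℝ) * (m.choose k : ℝ) * x ^ k) -
      ∑ k ∈ Finset.range (n + 1),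
        (if k = 0 then 0 else (n.choose (k + 1) : ℝ) * (m.choose (k - 1) : ℝ)) * x ^ k := by
    simp [genNarayana, sub_mul, Finset.sum_sub_distrib]
  have hQ : (n.choose (m + 2) : ℝ) * x ^ (m + 1) ≤
      ∑ k ∈ Finset.range (n + 1),
        (if k = 0 then 0 else (n.choose (k + 1) : ℝ) * (m.choose (k - 1) : ℝ)) * x ^ k := by
    have hmem : m + 1 ∈ Finset.range (n + 1) := by
      simp; omega
    have := Finset.single_le_sum
      (f := fun k => (if k = 0 then 0 else (n.choose (k + 1) : ℝ) * (m.choose (k - 1) : ℝ)) * x ^ k)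
      (fun k _ => by positivity) hmem
    simpa using this
  have hP : (∑ k ∈ Finset.range (n + 1), (n.choose k : ℝ) * (m.choose k : ℝ) * x ^ k) =
      ∑ k ∈ Finset.range (m + 1), (n.choose k : ℝ) * (m.choose k : ℝ) * x ^ k := by
    refine (Finset.sum_subset (Finset.range_subset_range.2 (by omega)) ?_).symm
    intro k _ hk
    have : m < k := by simpa using hk
    simp [Nat.choose_eq_zero_of_lt this]
  have hPbound : (∑ k ∈ Finset.range (m + 1), (n.choose k : ℝ) * (m.choose k : ℝ) * x ^ k) ≤
      K * (n : ℝ) ^ m * x ^ (m + 1) := by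
    rw [hKdef, Finset.sum_mul, Finset.sum_mul]
    refine Finset.sum_le_sum ?_
    intro k hk
    have hkm : k ≤ m := by simpa [Nat.lt_succ_iff] using hk
    have hn1 : 1 ≤ n := by omega
    have h1 : (n.choose k : ℝ) ≤ (n : ℝ) ^ m := by
      have : n.choose k ≤ n ^ m := by
        calc n.choose k ≤ n.descFactorial k := by
              rw [Nat.descFactorial_eq_factorial_mul_choose]
              exact Nat.le_mul_of_pos_left _ k.factorial_pos
          _ ≤ n ^ k := Nat.descFactorial_le_pow _ _
          _ ≤ n ^ m := Nat.pow_le_pow_right hn1 hkm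
      exact_mod_cast this
    have h2 : x ^ k * ε ^ (m + 1 - k) ≤ x ^ (m + 1) := by
      calc x ^ k * ε ^ (m + 1 - k) ≤ x ^ k * x ^ (m + 1 - k) := by
            have := pow_le_pow_left₀ hε.le hx (m + 1 - k)
            nlinarith [pow_pos hx0 k]
        _ = x ^ (m + 1) := by rw [← pow_add]; congr 1; omega
    have h3 : x ^ k ≤ x ^ (m + 1) / ε ^ (m + 1 - k) :=
      (le_div_iff₀ (pow_pos hε _)).2 h2
    calc (n.choose k : ℝ) * (m.choose k : ℝ) * x ^ k
        ≤ (n : ℝ) ^ m * (m.choose k : ℝ) * (x ^ (m + 1) / ε ^ (m + 1 - k)) := by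
          have hc : (0:ℝ) ≤ (m.choose k : ℝ) := by positivity
          have := mul_le_mul h1 h3 (by positivity) (by positivity)
          nlinarith [this, hc, mul_le_mul_of_nonneg_right this hc]
      _ = (m.choose k : ℝ) / ε ^ (m + 1 - k) * (n : ℝ) ^ m * x ^ (m + 1) := by ring
  have hfin : genNarayana n m x ≤ (K * (n : ℝ) ^ m - (n.choose (m + 2) : ℝ)) * x ^ (m + 1) := by
    rw [hsplit, hP]
    nlinarith [hPbound, hQ]
  have hneg : (K * (n : ℝ) ^ m - (n.choose (m + 2) : ℝ)) * x ^ (m + 1) < 0 :=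
    mul_neg_of_neg_of_pos (by linarith) (pow_pos hx0 _)
  linarith

private lemma big_eventually (m : ℕ) (K : ℝ) (hK : 0 ≤ K) :
    ∃ N : ℕ, ∀ n ≥ N, K * (n : ℝ) ^ m < (n.choose (m + 2) : ℝ) := by
  obtain ⟨N₀, hN₀⟩ := exists_nat_gt ((2 : ℝ) ^ (m + 2) * (m + 2).factorial * K)
  refine ⟨max N₀ (2 * (m + 2)), fun n hn => ?_⟩
  have hn1 : 2 * (m + 2) ≤ n := le_trans (le_max_right _ _) hn
  have hn0 : N₀ ≤ n := le_trans (le_max_left _ _) hn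
  set c : ℝ := (n : ℝ) with hc
  have hc1 : (1 : ℝ) ≤ c := by rw [hc]; exact_mod_cast (by omega : 1 ≤ n)
  have hchalf : c / 2 ≤ c - (m + 1) := by
    have h : ((2 * (m + 2) : ℕ) : ℝ) ≤ c := by rw [hc]; exact_mod_cast hn1
    push_cast at h
    linarith
  have hdesc : (c - (m + 1)) ^ (m + 2) ≤ ((m + 2).factorial : ℝ) * (n.choose (m + 2) : ℝ) := by
    have h1 : (n + 1 - (m + 2)) ^ (m + 2) ≤ n.descFactorial (m + 2) :=
      Nat.pow_sub_le_descFactorial n (m + 2)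
    have h2 : n.descFactorial (m + 2) = (m + 2).factorial * n.choose (m + 2) :=
      Nat.descFactorial_eq_factorial_mul_choose n (m + 2)
    have h3 : ((n + 1 - (m + 2) : ℕ) : ℝ) = c - (m + 1) := by
      have he : n + 1 - (m + 2) = n - (m + 1) := by omega
      rw [he, Nat.cast_sub (by omega : m + 1 ≤ n), hc]
      push_cast; ring
    calc (c - (m + 1)) ^ (m + 2) = ((n + 1 - (m + 2) : ℕ) : ℝ) ^ (m + 2) := by rw [h3]
      _ ≤ ((n.descFactorial (m + 2) : ℕ) : ℝ) := by exact_mod_cast h1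
      _ = ((m + 2).factorial : ℝ) * (n.choose (m + 2) : ℝ) := by rw [h2]; push_cast; ring
  have hhalfpow : (c / 2) ^ (m + 2) ≤ (c - (m + 1)) ^ (m + 2) :=
    pow_le_pow_left₀ (by linarith) hchalf _
  have heq : (c / 2) ^ (m + 2) = c ^ m * c ^ 2 / 2 ^ (m + 2) := by
    rw [div_pow, pow_add]
  have hcN : (2 : ℝ) ^ (m + 2) * (m + 2).factorial * K < c := by
    refine lt_of_lt_of_le hN₀ ?_
    rw [hc]; exact_mod_cast hn0
  have hcm : (0 : ℝ) < c ^ m := pow_pos (by linarith) m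
  have hfac : (0 : ℝ) < ((m + 2).factorial : ℝ) := by exact_mod_cast (m + 2).factorial_pos
  have h2pow : (0 : ℝ) < (2 : ℝ) ^ (m + 2) := by positivity
  -- K * c^m * (m+2)! * 2^(m+2) < c * c^m ≤ c^2 * c^m
  have key : K * c ^ m * ((m + 2).factorial : ℝ) * 2 ^ (m + 2) < c ^ m * c ^ 2 := by
    have h4 : (2 : ℝ) ^ (m + 2) * (m + 2).factorial * K * c ^ m < c * c ^ m :=
      mul_lt_mul_of_pos_right hcN hcm
    nlinarith [h4, mul_nonneg (mul_nonneg (sub_nonneg.2 hc1) (by linarith : (0:ℝ) ≤ c)) hcm.le]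
  have : K * c ^ m * ((m + 2).factorial : ℝ) * 2 ^ (m + 2) < ((m + 2).factorial : ℝ) * (n.choose (m + 2) : ℝ) * 2 ^ (m + 2) := by
    calc K * c ^ m * ((m + 2).factorial : ℝ) * 2 ^ (m + 2) < c ^ m * c ^ 2 := key
      _ = (c / 2) ^ (m + 2) * 2 ^ (m + 2) := by rw [heq]; field_simp
      _ ≤ ((m + 2).factorial : ℝ) * (n.choose (m + 2) : ℝ) * 2 ^ (m + 2) := by
          have := le_trans hhalfpow hdesc
          nlinarith [h2pow]
  have := lt_of_mul_lt_mul_right this h2pow.le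
  nlinarith [hfac]

theorem genNarayana_positive_zero_tendsto_zero (m : ℕ) (r : ℕ → ℝ)
    (hr : ∀ n : ℕ, m + 3 ≤ n → 0 < r n ∧ genNarayana n m (r n) = 0) :
    Filter.Tendsto r Filter.atTop (nhds 0) := by
  rw [NormedAddCommGroup.tendsto_nhds_zero]
  intro ε hε
  set K : ℝ := ∑ k ∈ Finset.range (m + 1), (m.choose k : ℝ) / ε ^ (m + 1 - k) with hKdef
  have hK : 0 ≤ K := Finset.sum_nonneg fun k _ => by positivity
  obtain ⟨N, hN⟩ := big_eventually m K hK
  rw [Filter.eventually_atTop]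
  refine ⟨max N (m + 3), fun n hn => ?_⟩
  have hn1 : m + 3 ≤ n := le_trans (le_max_right _ _) hn
  have hn2 : N ≤ n := le_trans (le_max_left _ _) hn
  obtain ⟨hrpos, hrzero⟩ := hr n hn1
  rw [Real.norm_eq_abs, abs_of_pos hrpos]
  by_contra h
  push_neg at h
  have := genNarayana_neg_of_big m n ε (r n) hε h (by omega) (hN n hn2)
  linarith [this, hrzero.ge]
end

section
/- Let m ≥ 0 and n ≥ m+3 be integers, and let r_{n,m}^+ denote the unique positive zero of N_{n,m}(x). Then r_{n+1,m}^+ < r_{n,m}^+. -/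
/-- The coefficient of `x^k` in `genNarayana n m`. -/
noncomputable def gcoef (n m k : ℕ) : ℝ :=
  ((n.choose k : ℝ) * (m.choose k : ℝ)) -
    (if k = 0 then 0 else (n.choose (k + 1) : ℝ) * (m.choose (k - 1) : ℝ))

lemma genNarayana_eq (n m : ℕ) (x : ℝ) :
    genNarayana n m x = ∑ k ∈ Finset.range (n + 1), gcoef n m k * x ^ k := rfl

lemma chooseA (N m k : ℕ) (hN : m + 2 ≤ N) (hk : 1 ≤ k) (h : k * (N - m) ≤ m + 1) :
    N.choose (k + 1) * m.choose (k - 1) ≤ N.choose k * m.choose k := by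
  rcases k with _ | j
  · omega
  · -- k = j + 1
    have hd : 2 ≤ N - m := by omega
    have hkm : j + 1 ≤ m := by
      have h2 : (j + 1) * 2 ≤ (j + 1) * (N - m) := Nat.mul_le_mul_left _ hd
      omega
    have hkey : (N - (j + 1)) * (j + 1) ≤ (m - j) * (j + 2) := by
      zify [show j + 1 ≤ N by omega, show j ≤ m by omega]
      have h' : ((j : ℤ) + 1) * (N - m) ≤ m + 1 := by
        zify [show m ≤ N by omega] at h; linarith
      nlinarith [h']
    have hpos : 0 < (j + 2) * (j + 1) := by positivity
    apply Nat.le_of_mul_le_mul_right _ hpos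
    have e1 : N.choose (j + 2) * (j + 2) = N.choose (j + 1) * (N - (j + 1)) :=
      Nat.choose_succ_right_eq N (j + 1)
    have e2 : m.choose (j + 1) * (j + 1) = m.choose j * (m - j) :=
      Nat.choose_succ_right_eq m j
    calc N.choose (j + 1 + 1) * m.choose (j + 1 - 1) * ((j + 2) * (j + 1))
        = (N.choose (j + 2) * (j + 2)) * (m.choose j * (j + 1)) := by
          simp only [Nat.add_sub_cancel]; ring
      _ = N.choose (j + 1) * (N - (j + 1)) * (m.choose j * (j + 1)) := by rw [e1]
      _ = N.choose (j + 1) * m.choose j * ((N - (j + 1)) * (j + 1)) := by ring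
      _ ≤ N.choose (j + 1) * m.choose j * ((m - j) * (j + 2)) :=
          Nat.mul_le_mul_left _ hkey
      _ = N.choose (j + 1) * (m.choose j * (m - j)) * (j + 2) := by ring
      _ = N.choose (j + 1) * (m.choose (j + 1) * (j + 1)) * (j + 2) := by rw [e2]
      _ = N.choose (j + 1) * m.choose (j + 1) * ((j + 2) * (j + 1)) := by ring

lemma chooseB (N m k : ℕ) (hN : m + 2 ≤ N) (hk : 1 ≤ k) (h : m + 2 ≤ k * (N - m)) :
    N.choose k * m.choose k ≤ N.choose (k + 1) * m.choose (k - 1) := by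
  rcases k with _ | j
  · omega
  rcases Nat.lt_or_ge m (j + 1) with hm | hm
  · rw [Nat.choose_eq_zero_of_lt hm]; simp
  · have hkey : (m - j) * (j + 2) ≤ (N - (j + 1)) * (j + 1) := by
      zify [show j + 1 ≤ N by omega, show j ≤ m by omega]
      have h' : (m : ℤ) + 2 ≤ ((j : ℤ) + 1) * (N - m) := by
        zify [show m ≤ N by omega] at h; linarith
      nlinarith [h']
    have hpos : 0 < (j + 2) * (j + 1) := by positivity
    apply Nat.le_of_mul_le_mul_right _ hpos
    have e1 : N.choose (j + 2) * (j + 2) = N.choose (j + 1) * (N - (j + 1)) :=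
      Nat.choose_succ_right_eq N (j + 1)
    have e2 : m.choose (j + 1) * (j + 1) = m.choose j * (m - j) :=
      Nat.choose_succ_right_eq m j
    calc N.choose (j + 1) * m.choose (j + 1) * ((j + 2) * (j + 1))
        = N.choose (j + 1) * (m.choose (j + 1) * (j + 1)) * (j + 2) := by ring
      _ = N.choose (j + 1) * (m.choose j * (m - j)) * (j + 2) := by rw [e2]
      _ = N.choose (j + 1) * m.choose j * ((m - j) * (j + 2)) := by ring
      _ ≤ N.choose (j + 1) * m.choose j * ((N - (j + 1)) * (j + 1)) :=
          Nat.mul_le_mul_left _ hkey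
      _ = (N.choose (j + 1) * (N - (j + 1))) * (m.choose j * (j + 1)) := by ring
      _ = (N.choose (j + 2) * (j + 2)) * (m.choose j * (j + 1)) := by rw [e1]
      _ = N.choose (j + 1 + 1) * m.choose (j + 1 - 1) * ((j + 2) * (j + 1)) := by
          simp only [Nat.add_sub_cancel]; ring

lemma chooseC (n m j : ℕ) (hm : m ≤ n) :
    n.choose j * m.choose (j + 1) ≤ n.choose (j + 1) * m.choose j := by
  have hpos : 0 < j + 1 := by omega
  apply Nat.le_of_mul_le_mul_right _ hpos
  have e1 : n.choose (j + 1) * (j + 1) = n.choose j * (n - j) :=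
    Nat.choose_succ_right_eq n j
  have e2 : m.choose (j + 1) * (j + 1) = m.choose j * (m - j) :=
    Nat.choose_succ_right_eq m j
  calc n.choose j * m.choose (j + 1) * (j + 1)
      = n.choose j * (m.choose (j + 1) * (j + 1)) := by ring
    _ = n.choose j * (m.choose j * (m - j)) := by rw [e2]
    _ = n.choose j * m.choose j * (m - j) := by ring
    _ ≤ n.choose j * m.choose j * (n - j) :=
        Nat.mul_le_mul_left _ (Nat.sub_le_sub_right hm j)
    _ = (n.choose j * (n - j)) * m.choose j := by ring
    _ = (n.choose (j + 1) * (j + 1)) * m.choose j := by rw [e1]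
    _ = n.choose (j + 1) * m.choose j * (j + 1) := by ring

lemma gcoef_nonneg (N m k : ℕ) (hN : m + 2 ≤ N) (h : k * (N - m) ≤ m + 1) :
    0 ≤ gcoef N m k := by
  unfold gcoef
  rcases Nat.eq_zero_or_pos k with h0 | h0
  · subst h0; simp
  · rw [if_neg (by omega)]
    have h1 := chooseA N m k hN h0 h
    have h2 : ((N.choose (k + 1) * m.choose (k - 1) : ℕ) : ℝ) ≤
        ((N.choose k * m.choose k : ℕ) : ℝ) := by exact_mod_cast h1
    push_cast at h2
    linarith

lemma gcoef_nonpos (N m k : ℕ) (hN : m + 2 ≤ N) (hk : 1 ≤ k) (h : m + 2 ≤ k * (N - m)) :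
    gcoef N m k ≤ 0 := by
  unfold gcoef
  rw [if_neg (by omega)]
  have h1 := chooseB N m k hN hk h
  have h2 : ((N.choose k * m.choose k : ℕ) : ℝ) ≤
      ((N.choose (k + 1) * m.choose (k - 1) : ℕ) : ℝ) := by exact_mod_cast h1
  push_cast at h2
  linarith

lemma gcoef_succ_le (n m k : ℕ) (hm : m ≤ n) :
    gcoef (n + 1) m k ≤ gcoef n m k := by
  rcases k with _ | j
  · simp [gcoef]
  · unfold gcoef
    rw [if_neg (by omega), if_neg (by omega)]
    simp only [Nat.add_sub_cancel]
    have p1 : ((n + 1).choose (j + 1) : ℝ) = n.choose j + n.choose (j + 1) := by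
      rw [Nat.choose_succ_succ]; push_cast; ring
    have p2 : ((n + 1).choose (j + 2) : ℝ) = n.choose (j + 1) + n.choose (j + 2) := by
      rw [Nat.choose_succ_succ]; push_cast; ring
    rw [p1, p2]
    have h1 := chooseC n m j hm
    have h2 : ((n.choose j * m.choose (j + 1) : ℕ) : ℝ) ≤
        ((n.choose (j + 1) * m.choose j : ℕ) : ℝ) := by exact_mod_cast h1
    push_cast at h2
    linarith

lemma gcoef_one_lt (n m : ℕ) (hm : m < n) :
    gcoef (n + 1) m 1 < gcoef n m 1 := by
  unfold gcoef
  rw [if_neg (by omega), if_neg (by omega)]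
  simp only [Nat.sub_self, Nat.choose_zero_right, Nat.choose_one_right]
  have p2 : ((n + 1).choose 2 : ℝ) = n.choose 1 + n.choose 2 := by
    rw [Nat.choose_succ_succ]; push_cast; ring
  rw [p2]
  simp only [Nat.choose_one_right]
  push_cast
  have : (m : ℝ) < n := by exact_mod_cast hm
  nlinarith [this]

lemma genNarayana_step (n m : ℕ) (hm : m + 1 ≤ n) (r : ℝ) (hr : 0 < r) :
    genNarayana (n + 1) m r < genNarayana n m r := by
  have hz : gcoef n m (n + 1) = 0 := by
    unfold gcoef
    rw [if_neg (by omega), Nat.choose_eq_zero_of_lt (show n < n + 1 by omega),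
      Nat.choose_eq_zero_of_lt (show n < n + 1 + 1 by omega)]
    simp
  have hext : ∑ k ∈ Finset.range (n + 2), gcoef n m k * r ^ k = genNarayana n m r := by
    rw [show n + 2 = (n + 1) + 1 from rfl, Finset.sum_range_succ, hz, genNarayana_eq]
    ring
  rw [genNarayana_eq (n + 1), ← hext]
  apply Finset.sum_lt_sum
  · intro k _
    exact mul_le_mul_of_nonneg_right (gcoef_succ_le n m k (by omega)) (by positivity)
  · refine ⟨1, by simp, ?_⟩
    exact mul_lt_mul_of_pos_right (gcoef_one_lt n m (by omega)) (by positivity)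

lemma powkey (c r r' : ℝ) (hr : 0 ≤ r) (hrr : r ≤ r') (k K : ℕ)
    (hc : (k ≤ K ∧ 0 ≤ c) ∨ (K ≤ k ∧ c ≤ 0)) :
    c * r' ^ k * r ^ K ≤ c * r ^ k * r' ^ K := by
  have hr' : 0 ≤ r' := le_trans hr hrr
  rcases hc with ⟨hk, hc⟩ | ⟨hk, hc⟩
  · have key : r' ^ k * r ^ K ≤ r ^ k * r' ^ K := by
      have hKk : K = k + (K - k) := by omega
      rw [hKk, pow_add, pow_add]
      have h1 : 0 ≤ r' ^ k * r ^ k := by positivity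
      have h2 : r ^ (K - k) ≤ r' ^ (K - k) := pow_le_pow_left₀ hr hrr _
      nlinarith [mul_le_mul_of_nonneg_left h2 h1]
    calc c * r' ^ k * r ^ K = c * (r' ^ k * r ^ K) := by ring
      _ ≤ c * (r ^ k * r' ^ K) := mul_le_mul_of_nonneg_left key hc
      _ = c * r ^ k * r' ^ K := by ring
  · have key : r ^ k * r' ^ K ≤ r' ^ k * r ^ K := by
      have hKk : k = K + (k - K) := by omega
      rw [hKk, pow_add, pow_add]
      have h1 : 0 ≤ r ^ K * r' ^ K := by positivity
      have h2 : r ^ (k - K) ≤ r' ^ (k - K) := pow_le_pow_left₀ hr hrr _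
      nlinarith [mul_le_mul_of_nonneg_left h2 h1]
    calc c * r' ^ k * r ^ K = c * (r' ^ k * r ^ K) := by ring
      _ ≤ c * (r ^ k * r' ^ K) := mul_le_mul_of_nonpos_left key hc
      _ = c * r ^ k * r' ^ K := by ring

theorem genNarayana_positive_zero_anti_in_n (m n : ℕ) (h : m + 3 ≤ n)
    (r r' : ℝ) (hr : 0 < r) (hroot : genNarayana n m r = 0)
    (hr' : 0 < r') (hroot' : genNarayana (n + 1) m r' = 0) :
    r' < r := by
  by_contra hlt
  push_neg at hlt
  have hval : genNarayana (n + 1) m r < 0 := by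
    have := genNarayana_step n m (by omega) r hr
    rwa [hroot] at this
  set d := n + 1 - m with hd
  have hd4 : 4 ≤ d := by omega
  set K := (m + 1) / d + 1 with hKdef
  have hKd : m + 2 ≤ K * d := by
    have h1 := Nat.div_add_mod (m + 1) d
    have h2 : (m + 1) % d < d := Nat.mod_lt _ (by omega)
    calc m + 2 = d * ((m + 1) / d) + (m + 1) % d + 1 := by rw [h1]
      _ ≤ d * ((m + 1) / d) + d := by omega
      _ = K * d := by rw [hKdef]; ring
  have hsum : (∑ k ∈ Finset.range (n + 1 + 1), gcoef (n + 1) m k * r' ^ k) * r ^ K ≤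
      (∑ k ∈ Finset.range (n + 1 + 1), gcoef (n + 1) m k * r ^ k) * r' ^ K := by
    rw [Finset.sum_mul, Finset.sum_mul]
    apply Finset.sum_le_sum
    intro k _
    apply powkey _ _ _ hr.le hlt
    rcases le_or_gt k ((m + 1) / d) with hk | hk
    · left
      refine ⟨by omega, ?_⟩
      apply gcoef_nonneg (n + 1) m k (by omega)
      exact (Nat.le_div_iff_mul_le (by omega)).mp hk
    · right
      refine ⟨by omega, ?_⟩
      apply gcoef_nonpos (n + 1) m k (by omega) (Nat.lt_of_le_of_lt (Nat.zero_le _) hk)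
      calc m + 2 ≤ K * d := hKd
        _ ≤ k * d := Nat.mul_le_mul (show K ≤ k by omega) le_rfl
  rw [← genNarayana_eq, ← genNarayana_eq, hroot', zero_mul] at hsum
  have hneg : genNarayana (n + 1) m r * r' ^ K < 0 :=
    mul_neg_of_neg_of_pos hval (by positivity)
  linarith
end

section
/- For nonnegative integers n, m, k, the coefficient identity C(n,k)·C(m,k) − C(n,k+1)·C(m,k−1) = C(n+1,k+1)·C(m+1,k)·((m−n)k + m + 1) / ((n+1)(m+1)) holds (as an identity of rational numbers, where m−n is computed in the integers). -/
theorem narayana_coefficient_identity (n m k : ℕ) :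
    ((n.choose k : ℚ) * (m.choose k : ℚ)) -
        (if k = 0 then 0 else (n.choose (k + 1) : ℚ) * (m.choose (k - 1) : ℚ)) =
      ((n + 1).choose (k + 1) : ℚ) * ((m + 1).choose k : ℚ) *
          (((m : ℚ) - n) * k + m + 1) / (((n : ℚ) + 1) * ((m : ℚ) + 1)) := by
  have hn : ((n : ℚ) + 1) ≠ 0 := by positivity
  have hm : ((m : ℚ) + 1) ≠ 0 := by positivity
  rcases k with _ | j
  · simp [Nat.choose_one_right]
    field_simp
  · simp only [Nat.succ_ne_zero, if_false, Nat.succ_sub_one]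
    -- key cast identities
    have h1 : ((n : ℚ) + 1) * (n.choose (j + 1)) =
        ((n + 1).choose (j + 2)) * (j + 2) := by
      exact_mod_cast congrArg (Nat.cast : ℕ → ℚ) (Nat.add_one_mul_choose_eq n (j + 1))
    have h2 : ((m : ℚ) + 1) * (m.choose j) =
        ((m + 1).choose (j + 1)) * (j + 1) := by
      exact_mod_cast congrArg (Nat.cast : ℕ → ℚ) (Nat.add_one_mul_choose_eq m j)
    have p1 : ((n + 1).choose (j + 2) : ℚ) = n.choose (j + 1) + n.choose (j + 2) := by
      exact_mod_cast congrArg (Nat.cast : ℕ → ℚ) (Nat.choose_succ_succ (n) (j + 1))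
    have p2 : ((m + 1).choose (j + 1) : ℚ) = m.choose j + m.choose (j + 1) := by
      exact_mod_cast congrArg (Nat.cast : ℕ → ℚ) (Nat.choose_succ_succ (m) j)
    rw [eq_div_iff (mul_ne_zero hn hm)]
    push_cast at *
    linear_combination ((m:ℚ)+1)*(((m + 1).choose (j + 1)):ℚ)*h1
      - ((n:ℚ)+1)*(((n + 1).choose (j + 2)):ℚ)*h2
      + ((n:ℚ)+1)*((m:ℚ)+1)*((m.choose j):ℚ)*p1
      - ((n:ℚ)+1)*((m:ℚ)+1)*((n.choose (j+1)):ℚ)*p2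
end

section
/- For integers m ≥ 0 and n ≥ m+2 and any real x, one has N_{n-1,m}(x) − N_{n,m}(x) = ((n−m−1)/n) · Σ_{k=0}^{m+1} C(n,k)·C(m,k−1)·x^k. -/
lemma coeff_key (n m j : ℕ) (h : m + 2 ≤ n) (hj : j ≤ m) :
    ((((n-1).choose (j+1):ℝ) * m.choose (j+1)) - (((n-1).choose (j+2):ℝ) * m.choose j))
      - (((n.choose (j+1):ℝ) * m.choose (j+1)) - ((n.choose (j+2):ℝ) * m.choose j))
    = (((n:ℝ) - m - 1)/n) * ((n.choose (j+1):ℝ) * (m.choose j:ℝ)) := by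
  obtain ⟨p, rfl⟩ : ∃ p, n = p + 1 := ⟨n - 1, by omega⟩
  simp only [Nat.add_sub_cancel]
  have hn : ((p:ℝ) + 1) ≠ 0 := by positivity
  have hP1 : ((p+1).choose (j+1):ℝ) = p.choose j + p.choose (j+1) := by
    push_cast [Nat.choose_succ_succ]; ring
  have hP2 : ((p+1).choose (j+2):ℝ) = p.choose (j+1) + p.choose (j+2) := by
    push_cast [Nat.choose_succ_succ (n := p) (k := j+1)]; ring
  have hE2 : ((p:ℝ) + 1) * p.choose j = ((p+1).choose (j+1) : ℝ) * ((j:ℝ)+1) := by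
    exact_mod_cast congrArg (Nat.cast : ℕ → ℝ) (Nat.add_one_mul_choose_eq p j)
  have hE3 : (m.choose (j+1) : ℝ) * ((j:ℝ)+1) = (m.choose j : ℝ) * ((m:ℝ) - j) := by
    have h0 := Nat.choose_succ_right_eq m j
    have hc : ((m - j : ℕ) : ℝ) = (m:ℝ) - j := by rw [Nat.cast_sub hj]
    calc (m.choose (j+1) : ℝ) * ((j:ℝ)+1)
        = ((m.choose (j+1) * (j+1) : ℕ) : ℝ) := by push_cast; ring
      _ = ((m.choose j * (m - j) : ℕ) : ℝ) := by rw [h0]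
      _ = (m.choose j : ℝ) * ((m:ℝ) - j) := by push_cast [hc]; ring
  field_simp
  push_cast
  linear_combination ((p:ℝ)+1) * (m.choose j : ℝ) * hP2
    - ((p:ℝ)+1) * ((m.choose j : ℝ) + (m.choose (j+1) : ℝ)) * hP1
    - ((m.choose j : ℝ) + (m.choose (j+1) : ℝ)) * hE2
    - ((p+1).choose (j+1) : ℝ) * hE3

theorem genNarayana_difference_formula (m n : ℕ) (h : m + 2 ≤ n) (x : ℝ) :
    genNarayana (n - 1) m x - genNarayana n m x =
      (((n : ℝ) - m - 1) / n) *
        ∑ k ∈ Finset.range (m + 2),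
          (n.choose k : ℝ) *
            (if k = 0 then 0 else (m.choose (k - 1) : ℝ)) * x ^ k := by
  have h1 : n - 1 + 1 = n := by omega
  have hA : genNarayana (n-1) m x =
      ∑ k ∈ Finset.range (n+1),
        ((((n-1).choose k : ℝ) * (m.choose k : ℝ)) -
          (if k = 0 then 0 else ((n-1).choose (k + 1) : ℝ) * (m.choose (k - 1) : ℝ))) * x ^ k := by
    unfold genNarayana
    rw [h1, Finset.sum_range_succ]
    have c1 : ((n-1).choose n : ℝ) = 0 := by
      rw [Nat.choose_eq_zero_of_lt (by omega)]; norm_num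
    have c2 : (m.choose (n-1) : ℝ) = 0 := by
      rw [Nat.choose_eq_zero_of_lt (by omega)]; norm_num
    have c3 : (m.choose n : ℝ) = 0 := by
      rw [Nat.choose_eq_zero_of_lt (by omega)]; norm_num
    rw [c1, c2, c3]
    simp [show ¬ (n = 0) by omega]
  have hB : (∑ k ∈ Finset.range (m + 2),
        (n.choose k : ℝ) * (if k = 0 then 0 else (m.choose (k - 1) : ℝ)) * x ^ k)
      = ∑ k ∈ Finset.range (n+1),
        (n.choose k : ℝ) * (if k = 0 then 0 else (m.choose (k - 1) : ℝ)) * x ^ k := by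
    apply Finset.sum_subset
    · intro k hk
      simp only [Finset.mem_range] at *
      omega
    · intro k _ hk
      simp only [Finset.mem_range, not_lt] at hk
      have : (m.choose (k-1) : ℝ) = 0 := by
        rw [Nat.choose_eq_zero_of_lt (by omega)]; norm_num
      rw [this]
      simp [show ¬ (k = 0) by omega]
  rw [hA, hB]
  unfold genNarayana
  rw [← Finset.sum_sub_distrib, Finset.mul_sum]
  apply Finset.sum_congr rfl
  intro k _
  rcases Nat.eq_zero_or_pos k with rfl | hk
  · simp [h1]
  obtain ⟨j, rfl⟩ : ∃ j, k = j + 1 := ⟨k - 1, by omega⟩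
  simp only [Nat.add_sub_cancel, if_neg (Nat.succ_ne_zero j)]
  rcases le_or_gt j m with hj | hj
  · rw [← sub_mul, show j + 1 + 1 = j + 2 from rfl, coeff_key n m j h hj]
    ring
  · have c1 : (m.choose j : ℝ) = 0 := by
      rw [Nat.choose_eq_zero_of_lt hj]; norm_num
    have c2 : (m.choose (j+1) : ℝ) = 0 := by
      rw [Nat.choose_eq_zero_of_lt (by omega)]; norm_num
    rw [c1, c2]
    ring
end

section
/- For every integer m ≥ 0, the generalized Narayana polynomial N_{m+2,m} vanishes at x = 1, i.e., N_{m+2,m}(1) = Σ_{k=0}^{m+2} (C(m+2,k)·C(m,k) − C(m+2,k+1)·C(m,k−1)) = 0. -/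
open Finset in
lemma narayanaA (m : ℕ) :
    ∑ k ∈ range (m + 3), (m + 2).choose k * m.choose k = (2 * m + 2).choose m := by
  have h : (2 * m + 2) = (m + 2) + m := by ring
  rw [h, Nat.add_choose_eq, Finset.Nat.sum_antidiagonal_eq_sum_range_succ_mk]
  rw [show m + 3 = (m + 1) + 1 + 1 from rfl, Finset.sum_range_succ, Finset.sum_range_succ]
  rw [Nat.choose_eq_zero_of_lt (show m < m + 1 by omega),
    Nat.choose_eq_zero_of_lt (show m < m + 1 + 1 by omega), Nat.mul_zero, Nat.mul_zero,
    Nat.add_zero, Nat.add_zero]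
  refine Finset.sum_congr rfl fun k hk => ?_
  have hk' : k ≤ m := Nat.le_of_lt_succ (Finset.mem_range.mp hk)
  rw [← Nat.choose_symm hk']

open Finset in
lemma narayanaB (m : ℕ) :
    ∑ k ∈ range (m + 3),
      (if k = 0 then 0 else (m + 2).choose (k + 1) * m.choose (k - 1)) =
      (2 * m + 2).choose m := by
  have L : ∑ k ∈ range (m + 3),
      (if k = 0 then 0 else (m + 2).choose (k + 1) * m.choose (k - 1))
      = ∑ j ∈ range (m + 1), (m + 2).choose (j + 2) * m.choose j := by
    rw [show m + 3 = (m + 2) + 1 from rfl, Finset.sum_range_succ', if_pos rfl, Nat.add_zero]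
    rw [show m + 2 = (m + 1) + 1 from rfl, Finset.sum_range_succ]
    rw [if_neg (show ¬ (m + 1 + 1 = 0) by omega),
      Nat.choose_eq_zero_of_lt (show m + 2 < m + 1 + 1 + 1 by omega), Nat.zero_mul, Nat.add_zero]
    refine Finset.sum_congr rfl fun j _ => ?_
    rw [if_neg (show ¬ (j + 1 = 0) by omega)]
    congr 1
  have R : (2 * m + 2).choose m
      = ∑ j ∈ range (m + 1), (m + 2).choose (j + 2) * m.choose (m - j) := by
    have h : (2 * m + 2).choose m = (2 * m + 2).choose (m + 2) := by
      rw [← Nat.choose_symm (show m + 2 ≤ 2 * m + 2 by omega)]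
      congr 1
      omega
    rw [h, show (2 * m + 2) = (m + 2) + m by ring, Nat.add_choose_eq,
      Finset.Nat.sum_antidiagonal_eq_sum_range_succ_mk,
      show (m + 2).succ = (m + 1) + 1 + 1 from rfl,
      Finset.sum_range_succ', Finset.sum_range_succ']
    rw [Nat.choose_eq_zero_of_lt (show m < m + 2 - 0 by omega),
      Nat.choose_eq_zero_of_lt (show m < m + 2 - (0 + 1) by omega),
      Nat.mul_zero, Nat.mul_zero, Nat.add_zero, Nat.add_zero]
    refine Finset.sum_congr rfl fun j _ => ?_
    congr 2
    omega
  rw [L, R]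
  refine Finset.sum_congr rfl fun j hj => ?_
  have hj' : j ≤ m := Nat.le_of_lt_succ (Finset.mem_range.mp hj)
  rw [Nat.choose_symm hj']

theorem genNarayana_at_one_vanishes (m : ℕ) : genNarayana (m + 2) m 1 = 0 := by
  have hA := narayanaA m
  have hB := narayanaB m
  simp only [genNarayana, one_pow, mul_one, Finset.sum_sub_distrib]
  rw [sub_eq_zero]
  have e : ∀ k : ℕ, (if k = 0 then (0:ℝ) else ((m + 2).choose (k + 1) : ℝ) * (m.choose (k - 1) : ℝ))
      = ((if k = 0 then 0 else (m + 2).choose (k + 1) * m.choose (k - 1) : ℕ) : ℝ) := by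
    intro k; split <;> simp
  rw [Finset.sum_congr rfl fun k _ => e k]
  norm_cast
  rw [show m + 2 + 1 = m + 3 from rfl, hA, hB]
end

section
/- Let m ≥ 0 and n ≥ m+4 be integers, and let r_{n,m}^+ > 0 be the unique positive zero of N_{n,m}(x). Then N_{n,m+1}(r_{n,m}^+) > 0. -/
noncomputable def Sfun (n m i : ℕ) (r : ℝ) : ℝ :=
  ∑ j ∈ Finset.range (m + 1), (n.choose (j + i) : ℝ) * (m.choose j : ℝ) * r ^ j

lemma Sfun_nonneg (n m i : ℕ) {r : ℝ} (hr : 0 < r) : 0 ≤ Sfun n m i r := by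
  apply Finset.sum_nonneg
  intro j _
  positivity

lemma Sfun_pos (n m i : ℕ) {r : ℝ} (hr : 0 < r) (hi : i ≤ n) : 0 < Sfun n m i r := by
  apply Finset.sum_pos'
  · intro j _; positivity
  · refine ⟨0, Finset.mem_range.2 (by omega), ?_⟩
    have h1 : 0 < n.choose i := Nat.choose_pos hi
    simp
    positivity

lemma Sfun_eq_zero (n m i : ℕ) {r : ℝ} (hi : n < i) : Sfun n m i r = 0 := by
  apply Finset.sum_eq_zero
  intro j _
  have : n.choose (j + i) = 0 := Nat.choose_eq_zero_of_lt (by omega)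
  simp [this]

lemma Sfun_succ (n m i : ℕ) (r : ℝ) :
    Sfun n (m+1) i r = Sfun n m i r + r * Sfun n m (i+1) r := by
  unfold Sfun
  rw [Finset.sum_range_succ']
  have h1 : ∀ j ∈ Finset.range (m+1),
      (n.choose ((j+1) + i) : ℝ) * ((m+1).choose (j+1) : ℝ) * r ^ (j+1)
      = (n.choose ((j+1)+i) : ℝ) * (m.choose j : ℝ) * r ^ (j+1)
        + (n.choose (j + (i+1)) : ℝ) * (m.choose (j+1) : ℝ) * r ^ (j+1) := by
    intro j _
    rw [Nat.choose_succ_succ]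
    push_cast
    have : j + 1 + i = j + (i + 1) := by omega
    rw [this]
    ring
  rw [Finset.sum_congr rfl h1, Finset.sum_add_distrib]
  have h2 : ∑ j ∈ Finset.range (m+1),
      (n.choose ((j+1)+i) : ℝ) * (m.choose j : ℝ) * r ^ (j+1)
      = r * ∑ j ∈ Finset.range (m+1), (n.choose (j + (i+1)) : ℝ) * (m.choose j : ℝ) * r ^ j := by
    rw [Finset.mul_sum]
    apply Finset.sum_congr rfl
    intro j _
    have : j + 1 + i = j + (i + 1) := by omega
    rw [this]
    ring
  have h3 : (∑ j ∈ Finset.range (m+1),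
      (n.choose (j + (i+1)) : ℝ) * (m.choose (j+1) : ℝ) * r ^ (j+1))
      + (n.choose (0 + i) : ℝ) * ((m+1).choose 0 : ℝ) * r ^ 0
      = ∑ j ∈ Finset.range (m+1), (n.choose (j + i) : ℝ) * (m.choose j : ℝ) * r ^ j := by
    rw [Finset.sum_range_succ (fun j => (n.choose (j + (i+1)) : ℝ) * (m.choose (j+1) : ℝ) * r ^ (j+1))]
    have hz : (m.choose (m+1) : ℝ) = 0 := by
      simp [Nat.choose_eq_zero_of_lt]
    rw [hz]
    rw [show (∑ j ∈ Finset.range (m + 1), (n.choose (j + i) : ℝ) * (m.choose j : ℝ) * r ^ j)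
        = (∑ j ∈ Finset.range m, (n.choose ((j+1) + i) : ℝ) * (m.choose (j+1) : ℝ) * r ^ (j+1))
          + (n.choose (0 + i) : ℝ) * (m.choose 0 : ℝ) * r ^ 0 from
      Finset.sum_range_succ' (fun j => (n.choose (j + i) : ℝ) * (m.choose j : ℝ) * r ^ j) m]
    have h4 : ∀ j ∈ Finset.range m,
        (n.choose (j + (i+1)) : ℝ) * (m.choose (j+1) : ℝ) * r ^ (j+1)
        = (n.choose ((j+1) + i) : ℝ) * (m.choose (j+1) : ℝ) * r ^ (j+1) := by
      intro j _
      have : j + 1 + i = j + (i + 1) := by omega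
      rw [this]
    rw [Finset.sum_congr rfl h4]
    simp
  linarith [h2, h3]

lemma choose_strict_lc (n i : ℕ) (h : i + 2 ≤ n) :
    (n.choose i : ℝ) * (n.choose (i+2) : ℝ) < (n.choose (i+1) : ℝ) * (n.choose (i+1) : ℝ) := by
  obtain ⟨u, hu⟩ : ∃ u, n = i + 2 + u := ⟨n - (i+2), by omega⟩
  subst hu
  have e1 : (i+2+u).choose (i+1) * (i+1) = (i+2+u).choose i * (u + 2) := by
    have := Nat.choose_succ_right_eq (i+2+u) i
    have hs : i + 2 + u - i = u + 2 := by omega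
    rw [hs] at this
    omega
  have e2 : (i+2+u).choose (i+2) * (i+2) = (i+2+u).choose (i+1) * (u + 1) := by
    have := Nat.choose_succ_right_eq (i+2+u) (i+1)
    have hs : i + 2 + u - (i+1) = u + 1 := by omega
    rw [hs] at this
    simp only [show i+1+1 = i+2 from by omega] at this
    omega
  have ha : 0 < (i+2+u).choose i := Nat.choose_pos (by omega)
  have hb : 0 < (i+2+u).choose (i+1) := Nat.choose_pos (by omega)
  have e1' : ((i+2+u).choose (i+1) : ℝ) * (i+1) = ((i+2+u).choose i : ℝ) * (u + 2) := by
    exact_mod_cast congrArg (Nat.cast : ℕ → ℝ) e1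
  have e2' : ((i+2+u).choose (i+2) : ℝ) * (i+2) = ((i+2+u).choose (i+1) : ℝ) * (u + 1) := by
    exact_mod_cast congrArg (Nat.cast : ℕ → ℝ) e2
  have ha' : (0:ℝ) < (i+2+u).choose i := by exact_mod_cast ha
  have hb' : (0:ℝ) < (i+2+u).choose (i+1) := by exact_mod_cast hb
  have hi1 : (0:ℝ) < (i:ℝ) + 1 := by positivity
  have hi2 : (0:ℝ) < (i:ℝ) + 2 := by positivity
  nlinarith [mul_pos ha' hb', mul_pos hb' hb']

lemma Sfun_lc (n : ℕ) {r : ℝ} (hr : 0 < r) :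
    ∀ m i, i + 2 ≤ n → Sfun n m i r * Sfun n m (i+2) r < Sfun n m (i+1) r * Sfun n m (i+1) r := by
  intro m
  induction m with
  | zero =>
    intro i hi
    have hS : ∀ k, Sfun n 0 k r = (n.choose k : ℝ) := by
      intro k
      simp [Sfun]
    rw [hS, hS, hS]
    exact choose_strict_lc n i hi
  | succ m ih =>
    intro i hi
    have key : ∀ j, j + 2 ≤ n →
        Sfun n m j r * Sfun n m (j+2) r < Sfun n m (j+1) r * Sfun n m (j+1) r := ih
    -- abbreviations
    set a0 := Sfun n m i r with ha0
    set a1 := Sfun n m (i+1) r with ha1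
    set a2 := Sfun n m (i+2) r with ha2
    set a3 := Sfun n m (i+3) r with ha3
    have h0n : 0 ≤ a0 := Sfun_nonneg n m i hr
    have h1n : 0 ≤ a1 := Sfun_nonneg n m (i+1) hr
    have h2n : 0 ≤ a2 := Sfun_nonneg n m (i+2) hr
    have h3n : 0 ≤ a3 := Sfun_nonneg n m (i+3) hr
    have hA : a0 * a2 < a1 * a1 := key i hi
    have hB : a1 * a3 ≤ a2 * a2 := by
      by_cases h3 : i + 3 ≤ n
      · exact le_of_lt (key (i+1) (by omega))
      · have : a3 = 0 := Sfun_eq_zero n m (i+3) (by omega)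
        rw [this]
        nlinarith
    have hC : a0 * a3 ≤ a1 * a2 := by
      by_cases h3 : i + 3 ≤ n
      · have hB' : a1 * a3 < a2 * a2 := key (i+1) (by omega)
        have h1p : 0 < a1 := Sfun_pos n m (i+1) hr (by omega)
        have h2p : 0 < a2 := Sfun_pos n m (i+2) hr (by omega)
        nlinarith [mul_pos h1p h2p]
      · have : a3 = 0 := Sfun_eq_zero n m (i+3) (by omega)
        rw [this]
        nlinarith
    rw [Sfun_succ n m i r, Sfun_succ n m (i+1) r, Sfun_succ n m (i+2) r]
    rw [← ha0, ← ha1, ← ha2]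
    have h13 : i + 1 + 2 = i + 3 := by omega
    rw [h13, ← ha3]
    nlinarith [mul_nonneg hr.le (sub_nonneg.2 hC), mul_nonneg (mul_nonneg hr.le hr.le) (sub_nonneg.2 hB)]

lemma genNarayana_eq_s18 (n m : ℕ) (r : ℝ) (hmn : m + 1 ≤ n) :
    genNarayana n m r = Sfun n m 0 r - r * Sfun n m 2 r := by
  unfold genNarayana
  have hsplit : ∀ k ∈ Finset.range (n+1),
      (((n.choose k : ℝ) * (m.choose k : ℝ)) -
        (if k = 0 then 0 else (n.choose (k + 1) : ℝ) * (m.choose (k - 1) : ℝ))) * r ^ k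
      = (n.choose k : ℝ) * (m.choose k : ℝ) * r ^ k -
        (if k = 0 then 0 else (n.choose (k + 1) : ℝ) * (m.choose (k - 1) : ℝ)) * r ^ k := by
    intro k _; ring
  rw [Finset.sum_congr rfl hsplit, Finset.sum_sub_distrib]
  congr 1
  · -- first sum = Sfun n m 0 r
    unfold Sfun
    rw [← Finset.sum_subset (Finset.range_subset_range.2 (by omega : m + 1 ≤ n + 1))]
    · apply Finset.sum_congr rfl
      intro j _
      rw [show j + 0 = j from by omega]
    · intro k _ hk
      have : m.choose k = 0 := Nat.choose_eq_zero_of_lt (by simp [Finset.mem_range] at hk ⊢; omega)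
      simp [this]
  · -- second sum = r * Sfun n m 2 r
    rw [Finset.sum_range_succ' (fun k => (if k = 0 then (0:ℝ) else (n.choose (k + 1) : ℝ) * (m.choose (k - 1) : ℝ)) * r ^ k) n]
    simp only [if_neg (Nat.succ_ne_zero _), if_pos rfl, Nat.add_sub_cancel, zero_mul, add_zero]
    unfold Sfun
    rw [Finset.mul_sum]
    rw [← Finset.sum_subset (Finset.range_subset_range.2 (by omega : m + 1 ≤ n))]
    · rw [show (if True then (0:ℝ) else (n.choose (0 + 1) : ℝ) * (m.choose (0 - 1) : ℝ)) * r ^ 0 = 0 from by simp, add_zero]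
      apply Finset.sum_congr rfl
      intro j _
      rw [show j + 1 + 1 = j + 2 from by omega]
      ring
    · intro k _ hk
      have : m.choose k = 0 := Nat.choose_eq_zero_of_lt (by simp [Finset.mem_range] at hk ⊢; omega)
      simp [this]


theorem genNarayana_next_m_pos_at_zero (m n : ℕ) (h : m + 4 ≤ n) (r : ℝ)
    (hr : 0 < r) (hroot : genNarayana n m r = 0) :
    0 < genNarayana n (m + 1) r := by
  have e1 : genNarayana n m r = Sfun n m 0 r - r * Sfun n m 2 r :=
    genNarayana_eq_s18 n m r (by omega)
  have e2 : genNarayana n (m+1) r = Sfun n (m+1) 0 r - r * Sfun n (m+1) 2 r :=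
    genNarayana_eq_s18 n (m+1) r (by omega)
  rw [e2, Sfun_succ n m 0 r, Sfun_succ n m 2 r]
  rw [e1] at hroot
  set a0 := Sfun n m 0 r
  set a1 := Sfun n m 1 r
  set a2 := Sfun n m 2 r
  set a3 := Sfun n m 3 r
  have hA : a0 * a2 < a1 * a1 := Sfun_lc n hr m 0 (by omega)
  have hB : a1 * a3 < a2 * a2 := Sfun_lc n hr m 1 (by omega)
  have h1p : 0 < a1 := Sfun_pos n m 1 hr (by omega)
  have h2p : 0 < a2 := Sfun_pos n m 2 hr (by omega)
  have h3n : 0 ≤ a3 := Sfun_nonneg n m 3 hr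
  -- hroot : a0 - r * a2 = 0, so a0 = r * a2
  have hr0 : a0 = r * a2 := by linarith
  -- a1^2 > a0*a2 = r*a2^2 > r*a1*a3, so a1 > r*a3
  have key : r * a3 < a1 := by
    have h1 : r * (a2 * a2) < a1 * a1 := by rw [← hr0] at *; nlinarith
    have h2 : r * (a1 * a3) < r * (a2 * a2) := by
      apply mul_lt_mul_of_pos_left hB hr
    nlinarith
  have : Sfun n m 0 r + r * a1 - r * (a2 + r * a3) = (a0 - r * a2) + r * (a1 - r * a3) := by ring
  rw [this, hroot]
  nlinarith
end
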